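/- arXiv:1309.0896 — 8 statements merged into one kernel-verified Lean document; each statement's English description precedes it below -/
import Mathlib

section
/- Let a ∈ [0,1] and q ∈ (0,1). The least fixed point over [0,1] of the monotone map x ↦ min(1, x + max(0, a + (1 − q) − 1)) equals 1 if a > q, and equals 0 otherwise. (This is the semantics of the threshold formula P_{>q} φ = μX.(X ⊕ (φ ⊙ (1−q))) at a state where φ has value a.) -/
open unitInterval

instance : Fact ((0:ℝ) ≤ 1) := ⟨zero_le_one⟩

/-- Let `a ∈ [0,1]` and `q ∈ (0,1)`. The least fixed point over `[0,1]` of the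
monotone map `x ↦ min 1 (x + max 0 (a + (1 - q) - 1))` equals `1` if `a > q`,
and equals `0` otherwise.  (Semantics of the threshold formula
`P_{>q} φ = μX.(X ⊕ (φ ⊙ (1-q)))` at a state where `φ` has value `a`.) -/
theorem stmt2 (a q : ℝ) (ha : a ∈ Set.Icc (0:ℝ) 1) (hq : q ∈ Set.Ioo (0:ℝ) 1)
    (f : I →o I)
    (hf : ∀ x : I, ((f x : I) : ℝ) = min 1 ((x : ℝ) + max 0 (a + (1 - q) - 1))) :
    (q < a → OrderHom.lfp f = 1) ∧ (¬ q < a → OrderHom.lfp f = 0) := by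
  constructor
  · intro hlt
    have hc : max 0 (a + (1 - q) - 1) = a - q := by
      rw [max_eq_right] <;> linarith
    have hfix : f (OrderHom.lfp f) = OrderHom.lfp f := f.map_lfp
    set x := OrderHom.lfp f with hx
    have h : ((x : I) : ℝ) = min 1 ((x : ℝ) + (a - q)) := by
      rw [← hc, ← hf x, hfix]
    have hx1 : (x : ℝ) ≤ 1 := x.2.2
    have : (x : ℝ) = 1 := by
      rcases min_cases 1 ((x : ℝ) + (a - q)) with ⟨h1, _⟩ | ⟨h1, h2⟩
      · linarith [h.trans h1]
      · rw [h1] at h; linarith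
    exact Subtype.ext this
  · intro hle
    push_neg at hle
    have hc : max 0 (a + (1 - q) - 1) = 0 := by
      rw [max_eq_left]; linarith
    have h0 : f 0 ≤ 0 := by
      have := hf 0
      rw [hc] at this
      have : ((f 0 : I) : ℝ) = 0 := by simpa using this
      exact le_of_eq (Subtype.ext this)
    have := OrderHom.lfp_le f h0
    exact le_antisymm this bot_le
end

section
/- Let a ∈ [0,1] and q ∈ (0,1). The greatest fixed point over [0,1] of the monotone map x ↦ max(0, x + min(1, a + (1 − q)) − 1) equals 1 if a ≥ q, and equals 0 otherwise. (This is the semantics of the threshold formula P_{≥q} φ = νX.(X ⊙ (φ ⊕ (1−q))) at a state where φ has value a.) -/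
open unitInterval

/-- Let `a ∈ [0,1]` and `q ∈ (0,1)`. The greatest fixed point over `[0,1]` of the
monotone map `x ↦ max 0 (x + min 1 (a + (1 - q)) - 1)` equals `1` if `a ≥ q`,
and equals `0` otherwise.  (Semantics of the threshold formula
`P_{≥q} φ = νX.(X ⊙ (φ ⊕ (1-q)))` at a state where `φ` has value `a`.) -/
theorem stmt3 (a q : ℝ) (ha : a ∈ Set.Icc (0:ℝ) 1) (hq : q ∈ Set.Ioo (0:ℝ) 1)
    (g : I →o I)
    (hg : ∀ x : I, ((g x : I) : ℝ) = max 0 ((x : ℝ) + min 1 (a + (1 - q)) - 1)) :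
    (q ≤ a → OrderHom.gfp g = 1) ∧ (¬ q ≤ a → OrderHom.gfp g = 0) := by
  constructor
  · intro hqa
    have h1 : g 1 = 1 := by
      have := hg 1
      have hmin : min 1 (a + (1 - q)) = 1 := min_eq_left (by linarith)
      apply Subtype.ext
      rw [this, hmin]
      norm_num
    have hle : (1 : I) ≤ OrderHom.gfp g := OrderHom.le_gfp g h1.ge
    exact le_antisymm le_top hle
  · intro hqa
    push_neg at hqa
    set x := OrderHom.gfp g with hx
    have hfix : g x = x := OrderHom.map_gfp g
    have := hg x
    rw [hfix] at this
    have hmin : min 1 (a + (1 - q)) ≤ a + (1 - q) := min_le_right _ _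
    have hx0 : (x : ℝ) = 0 := by
      rcases le_or_gt ((x : ℝ) + min 1 (a + (1 - q)) - 1) 0 with h | h
      · rw [max_eq_left h] at this; exact this
      · rw [max_eq_right h.le] at this
        have : min 1 (a + (1 - q)) = 1 := by linarith
        have := hmin.trans_eq' this
        linarith
    exact Subtype.ext hx0
end

section
/- Let S be a set, let D be a set of discrete probability distributions on S, let g : S → [0,1], and let b = inf_{d ∈ D} ∑ₜ d(t)·g(t), computed in the complete lattice [0,1] (so b = 1 when D is empty). Then the greatest fixed point over [0,1] of the monotone map x ↦ max(0, x + b − 1) equals 1 if g(t) = 1 for all d ∈ D and all t ∈ S with d(t) > 0, and equals 0 otherwise. (This is the semantics of the Łukasiewicz μ-calculus formula P_{=1}(□X) = νZ.(Z ⊙ □X) at a state whose set of outgoing distributions is D, under an interpretation assigning g to X.) -/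
open unitInterval

/-- Let `D` be a set of discrete probability distributions on `S`, `g : S → [0,1]`,
and let `b = inf_{d ∈ D} ∑ₜ d(t)·g(t)`, computed in the complete lattice `[0,1]`
(so `b = 1` when `D` is empty).  The greatest fixed point over `[0,1]` of the
monotone map `x ↦ max 0 (x + b - 1)` equals `1` if `g(t) = 1` for all `d ∈ D`
and all `t` with `d(t) > 0`, and equals `0` otherwise.
(Semantics of `P_{=1}(□X) = νZ.(Z ⊙ □X)`.) -/
theorem stmt8 {S : Type*} (D : Set (PMF S)) (g : S → ℝ)
    (hg : ∀ t, g t ∈ Set.Icc (0:ℝ) 1)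
    (b : I) (hb : b = sInf {x : I | ∃ d ∈ D, (x : ℝ) = ∑' t, (d t).toReal * g t})
    (f : I →o I) (hf : ∀ x : I, ((f x : I) : ℝ) = max 0 ((x : ℝ) + (b : ℝ) - 1)) :
    ((∀ d ∈ D, ∀ t, 0 < d t → g t = 1) → OrderHom.gfp f = 1) ∧
      (¬ (∀ d ∈ D, ∀ t, 0 < d t → g t = 1) → OrderHom.gfp f = 0) := by
  have hsum1 : ∀ d : PMF S, ∑' t, (d t).toReal = 1 := by
    intro d
    rw [← ENNReal.tsum_toReal_eq (fun t => PMF.apply_ne_top d t), d.tsum_coe,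
      ENNReal.toReal_one]
  have hsummable : ∀ d : PMF S, Summable (fun t => (d t).toReal) := by
    intro d
    exact ENNReal.summable_toReal (by rw [d.tsum_coe]; exact ENNReal.one_ne_top)
  constructor
  · intro h
    -- b = 1
    have hb1 : b = 1 := by
      rw [hb]
      apply le_antisymm le_one'
      apply le_sInf
      rintro x ⟨d, hd, hx⟩
      have : (x : ℝ) = 1 := by
        rw [hx]
        have : ∀ t, (d t).toReal * g t = (d t).toReal := by
          intro t
          rcases eq_or_ne (d t) 0 with h0 | h0
          · simp [h0]
          · rw [h d hd t (pos_iff_ne_zero.mpr h0), mul_one]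
        rw [tsum_congr this, hsum1]
      exact le_of_eq (Subtype.ext this.symm)
    have hf1 : f 1 = 1 := by
      apply Subtype.ext
      rw [hf 1]
      simp [hb1]
    exact le_antisymm le_one' (OrderHom.le_gfp f hf1.ge)
  · intro h
    push_neg at h
    obtain ⟨d, hd, t0, ht0, hgt0⟩ := h
    have hglt : g t0 < 1 := lt_of_le_of_ne (hg t0).2 hgt0
    have hdt0 : 0 < (d t0).toReal := ENNReal.toReal_pos (pos_iff_ne_zero.mp ht0)
      (PMF.apply_ne_top d t0)
    -- the sum for d is < 1
    have hle : ∀ t, (d t).toReal * g t ≤ (d t).toReal := by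
      intro t
      nlinarith [ENNReal.toReal_nonneg (a := d t), (hg t).2]
    have hnonneg : ∀ t, 0 ≤ (d t).toReal * g t :=
      fun t => mul_nonneg ENNReal.toReal_nonneg (hg t).1
    have hsummable2 : Summable (fun t => (d t).toReal * g t) :=
      Summable.of_nonneg_of_le hnonneg hle (hsummable d)
    have hlt : ∑' t, (d t).toReal * g t < 1 := by
      rw [← hsum1 d]
      exact Summable.tsum_lt_tsum hle (by nlinarith) hsummable2 (hsummable d)
    set s : ℝ := ∑' t, (d t).toReal * g t with hs
    have hs0 : 0 ≤ s := tsum_nonneg hnonneg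
    have hbs : b ≤ ⟨s, hs0, hlt.le⟩ := by
      rw [hb]
      exact sInf_le ⟨d, hd, rfl⟩
    have hblt : (b : ℝ) < 1 := lt_of_le_of_lt hbs hlt
    -- gfp is a fixed point; any fixed point is 0
    have hfix := f.map_gfp
    set x := OrderHom.gfp f with hx
    have hxr : (x : ℝ) = max 0 ((x : ℝ) + (b : ℝ) - 1) := by
      conv_lhs => rw [← hfix]
      exact hf x
    have hx0 : (x : ℝ) ≤ 0 := by
      by_contra hpos
      push_neg at hpos
      have : max 0 ((x : ℝ) + (b : ℝ) - 1) < (x : ℝ) :=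
        max_lt hpos (by linarith)
      linarith [hxr ▸ this]
    exact Subtype.ext (le_antisymm hx0 x.2.1)
end

section
/- Let S be a type, R : S → S → Prop a binary relation, and A, B ⊆ S. Consider the monotone operator F on the complete lattice of functions S → [0,1] (ordered pointwise) defined by F(f)(s) = max(χ_B(s), min(χ_A(s), h_f(s))), where h_f(s) = 1 if there exists t with R s t and f(t) > 0, and h_f(s) = 0 otherwise, and where χ_A, χ_B denote {0,1}-valued indicator functions. Then the least fixed point of F is the indicator function of the set of states s from which B is reachable through A, i.e. the set of s such that there exist n ≥ 0 and states s = s₀, s₁, …, sₙ with R sᵢ sᵢ₊₁ for all i < n, sₙ ∈ B, and sᵢ ∈ A for all i < n. (This is the correctness of the encoding E(∃(φ₁ U φ₂)) = μX.(E(φ₂) ⊔ (E(φ₁) ⊓ P_{>0}◇X)) in the case where φ₁, φ₂ denote the {0,1}-valued indicators of A and B.) -/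
open unitInterval

/-- Correctness of the encoding `E(∃(φ₁ U φ₂)) = μX.(E(φ₂) ⊔ (E(φ₁) ⊓ P_{>0}◇X))`
for `{0,1}`-valued `φ₁, φ₂` denoting sets `A, B`: the least fixed point of the
operator `F(f)(s) = max(χ_B s, min(χ_A s, h_f s))`, where `h_f` is the indicator
of `{s | ∃ t, R s t ∧ f t > 0}`, is the indicator of the set of states from which
`B` is reachable through `A`. -/
theorem stmt9 {S : Type*} (R : S → S → Prop) (A B : Set S)
    (F : (S → I) →o (S → I))
    (hF : ∀ (f : S → I) (s : S),
      F f s = max (B.indicator (fun _ => (1 : I)) s)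
        (min (A.indicator (fun _ => (1 : I)) s)
          ({s' : S | ∃ t, R s' t ∧ 0 < f t}.indicator (fun _ => (1 : I)) s))) :
    OrderHom.lfp F =
      ({s : S | ∃ (n : ℕ) (p : ℕ → S), p 0 = s ∧ (∀ i < n, R (p i) (p (i + 1))) ∧
          p n ∈ B ∧ ∀ i < n, p i ∈ A}).indicator (fun _ => (1 : I)) := by
  set Reach : Set S := {s : S | ∃ (n : ℕ) (p : ℕ → S), p 0 = s ∧
      (∀ i < n, R (p i) (p (i + 1))) ∧ p n ∈ B ∧ ∀ i < n, p i ∈ A} with hReach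
  set χ : S → I := Reach.indicator (fun _ => (1 : I)) with hχ
  have h01 : (0:I) < 1 := by
    rw [← Subtype.coe_lt_coe]; norm_num
  -- lfp ≤ χ
  have hle : OrderHom.lfp F ≤ χ := by
    apply OrderHom.lfp_le
    intro s
    rw [hF]
    by_cases hs : s ∈ Reach
    · calc max _ _ ≤ 1 := le_one'
        _ = χ s := by simp [hχ, Set.indicator_of_mem hs]
    · have hB : s ∉ B := by
        intro hb
        exact hs ⟨0, fun _ => s, rfl, by simp, hb, by simp⟩
      have hmin : (min (A.indicator (fun _ => (1 : I)) s)
          ({s' : S | ∃ t, R s' t ∧ 0 < χ t}.indicator (fun _ => (1 : I)) s)) ≤ χ s := by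
        by_cases hA : s ∈ A
        · by_cases hh : s ∈ {s' : S | ∃ t, R s' t ∧ 0 < χ t}
          · exfalso
            obtain ⟨t, hRt, ht⟩ := hh
            have htR : t ∈ Reach := by
              by_contra htR
              rw [hχ, Set.indicator_of_notMem htR] at ht
              exact lt_irrefl _ ht
            obtain ⟨n, p, hp0, hpR, hpB, hpA⟩ := htR
            refine hs ⟨n + 1, fun i => if i = 0 then s else p (i - 1), by simp, ?_, ?_, ?_⟩
            · intro i hi
              rcases Nat.eq_zero_or_pos i with h0 | h0
              · subst h0; simpa [hp0] using hRt
              · have : i ≠ 0 := h0.ne'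
                simp only [this, if_false, Nat.add_sub_cancel, if_neg (Nat.succ_ne_zero i)]
                have := hpR (i - 1) (by omega)
                have hi1 : i - 1 + 1 = i := by omega
                rwa [hi1] at this
            · simp only [Nat.add_sub_cancel, if_neg (Nat.succ_ne_zero n)]
              exact hpB
            · intro i hi
              rcases Nat.eq_zero_or_pos i with h0 | h0
              · subst h0; simpa using hA
              · have : i ≠ 0 := h0.ne'
                simp only [this, if_false]
                exact hpA (i - 1) (by omega)
          · rw [Set.indicator_of_notMem hh]
            exact min_le_right _ _ |>.trans (by simp [hχ])
        · rw [Set.indicator_of_notMem hA]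
          exact min_le_left _ _ |>.trans (by simp [hχ])
      rw [Set.indicator_of_notMem hB]
      exact max_le (by simp [hχ, Set.indicator_of_notMem hs]) hmin
  -- χ ≤ lfp
  have key : ∀ (n : ℕ) (p : ℕ → S), (∀ i < n, R (p i) (p (i + 1))) → p n ∈ B →
      (∀ i < n, p i ∈ A) → (1 : I) ≤ OrderHom.lfp F (p 0) := by
    intro n
    induction n with
    | zero =>
      intro p _ hpB _
      conv_rhs => rw [← OrderHom.map_lfp F]
      rw [hF, Set.indicator_of_mem hpB]
      exact le_max_left _ _
    | succ m ih =>
      intro p hpR hpB hpA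
      have h1 : (1 : I) ≤ OrderHom.lfp F (p 1) := by
        have := ih (fun i => p (i + 1)) (fun i hi => hpR (i + 1) (by omega))
          hpB (fun i hi => hpA (i + 1) (by omega))
        simpa using this
      conv_rhs => rw [← OrderHom.map_lfp F]
      rw [hF]
      have hA0 : p 0 ∈ A := hpA 0 (Nat.succ_pos m)
      have hh : p 0 ∈ {s' : S | ∃ t, R s' t ∧ 0 < OrderHom.lfp F t} :=
        ⟨p 1, hpR 0 (Nat.succ_pos m), lt_of_lt_of_le h01 h1⟩
      rw [Set.indicator_of_mem hA0, Set.indicator_of_mem hh]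
      simp
  have hge : χ ≤ OrderHom.lfp F := by
    intro s
    by_cases hs : s ∈ Reach
    · obtain ⟨n, p, hp0, hpR, hpB, hpA⟩ := hs
      rw [hχ, Set.indicator_of_mem]
      · rw [← hp0]; exact key n p hpR hpB hpA
      · exact ⟨n, p, hp0, hpR, hpB, hpA⟩
    · rw [hχ, Set.indicator_of_notMem hs]
      exact zero_le'
  exact le_antisymm hle hge
end

section
/- For every Łukasiewicz μ-term t(x₁, …, xₙ) and every vector (q₁, …, qₙ) of rational numbers in [0,1], the value t(q₁, …, qₙ) ∈ [0,1] is a rational number. -/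
open unitInterval

noncomputable section

/-- Łukasiewicz strong disjunction on `[0,1]`: `x ⊕ y = min 1 (x + y)`. -/
def lukAdd (x y : I) : I :=
  ⟨min 1 ((x : ℝ) + (y : ℝ)),
    le_min zero_le_one (add_nonneg x.2.1 y.2.1), min_le_left _ _⟩

/-- Łukasiewicz strong conjunction on `[0,1]`: `x ⊙ y = max 0 (x + y − 1)`. -/
def lukMul (x y : I) : I :=
  ⟨max 0 ((x : ℝ) + (y : ℝ) - 1), le_max_left _ _,
    max_le zero_le_one (by have := x.2.2; have := y.2.2; linarith)⟩

/-- Scalar multiplication `q x` by a rational `q ∈ [0,1]`. -/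
def lukScal (q : {q : ℚ // 0 ≤ q ∧ q ≤ 1}) (x : I) : I :=
  ⟨(q.1 : ℝ) * (x : ℝ), mul_nonneg (by exact_mod_cast q.2.1) x.2.1, by
    have h1 : (q.1 : ℝ) ≤ 1 := by exact_mod_cast q.2.2
    have h0 : (0 : ℝ) ≤ (q.1 : ℝ) := by exact_mod_cast q.2.1
    have := x.2.2; have := x.2.1
    nlinarith⟩

/-- Łukasiewicz μ-terms with (at most) `n` free variables, in de Bruijn style:
`t ::= x | q t | t ⊔ t | t ⊓ t | t ⊕ t | t ⊙ t | μx.t | νx.t`, with `q`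
ranging over rationals in `[0,1]`. -/
inductive LTerm : ℕ → Type
  | var {n} : Fin n → LTerm n
  | scal {n} : {q : ℚ // 0 ≤ q ∧ q ≤ 1} → LTerm n → LTerm n
  | join {n} : LTerm n → LTerm n → LTerm n
  | meet {n} : LTerm n → LTerm n → LTerm n
  | oplus {n} : LTerm n → LTerm n → LTerm n
  | odot {n} : LTerm n → LTerm n → LTerm n
  | mu {n} : LTerm (n + 1) → LTerm n
  | nu {n} : LTerm (n + 1) → LTerm n

/-- The value `t(r⃗) ∈ [0,1]` of a μ-term at `r⃗ ∈ [0,1]ⁿ`; `μ` and `ν` denote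
the least and greatest fixed points in the complete lattice `[0,1]`, given by
the Knaster–Tarski theorem as `sInf {x | t(r⃗,x) ≤ x}` and
`sSup {x | x ≤ t(r⃗,x)}` respectively. -/
def LTerm.eval : ∀ {n}, LTerm n → (Fin n → I) → I
  | _, .var i, ρ => ρ i
  | _, .scal q t, ρ => lukScal q (t.eval ρ)
  | _, .join t₁ t₂, ρ => max (t₁.eval ρ) (t₂.eval ρ)
  | _, .meet t₁ t₂, ρ => min (t₁.eval ρ) (t₂.eval ρ)
  | _, .oplus t₁ t₂, ρ => lukAdd (t₁.eval ρ) (t₂.eval ρ)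
  | _, .odot t₁ t₂, ρ => lukMul (t₁.eval ρ) (t₂.eval ρ)
  | _, .mu t, ρ => sInf {x : I | t.eval (Fin.snoc ρ x) ≤ x}
  | _, .nu t, ρ => sSup {x : I | x ≤ t.eval (Fin.snoc ρ x)}


namespace SL

/-- A linear atom over `n` real variables with rational coefficients:
`∑ aᵢ xᵢ + c ≥ 0` (or `> 0` if `strict`). -/
structure Atom (n : ℕ) where
  a : Fin n → ℚ
  c : ℚ
  strict : Bool

def Atom.lhs {n} (A : Atom n) (v : Fin n → ℝ) : ℝ :=
  (∑ i, (A.a i : ℝ) * v i) + (A.c : ℝ)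

def Atom.Holds {n} (A : Atom n) (v : Fin n → ℝ) : Prop :=
  if A.strict then 0 < A.lhs v else 0 ≤ A.lhs v

/-- DNF formulas: disjunction of conjunctions of atoms. -/
abbrev DNF (n : ℕ) := List (List (Atom n))

def DNF.Sem {n} (φ : DNF n) (v : Fin n → ℝ) : Prop :=
  ∃ C ∈ φ, ∀ A ∈ C, A.Holds v

def DNF.or {n} (φ ψ : DNF n) : DNF n := φ ++ ψ

theorem DNF.sem_or {n} (φ ψ : DNF n) (v : Fin n → ℝ) :
    (φ.or ψ).Sem v ↔ φ.Sem v ∨ ψ.Sem v := by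
  simp [DNF.Sem, DNF.or, List.mem_append]
  constructor
  · rintro ⟨C, hC | hC, h⟩
    · exact Or.inl ⟨C, hC, h⟩
    · exact Or.inr ⟨C, hC, h⟩
  · rintro (⟨C, hC, h⟩ | ⟨C, hC, h⟩)
    exacts [⟨C, Or.inl hC, h⟩, ⟨C, Or.inr hC, h⟩]

def DNF.and {n} (φ ψ : DNF n) : DNF n :=
  φ.flatMap fun C => ψ.map fun D => C ++ D

theorem DNF.sem_and {n} (φ ψ : DNF n) (v : Fin n → ℝ) :
    (φ.and ψ).Sem v ↔ φ.Sem v ∧ ψ.Sem v := by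
  simp only [DNF.Sem, DNF.and, List.mem_flatMap, List.mem_map]
  constructor
  · rintro ⟨E, ⟨C, hC, D, hD, rfl⟩, h⟩
    simp only [List.mem_append] at h
    exact ⟨⟨C, hC, fun A hA => h A (Or.inl hA)⟩, ⟨D, hD, fun A hA => h A (Or.inr hA)⟩⟩
  · rintro ⟨⟨C, hC, h1⟩, ⟨D, hD, h2⟩⟩
    refine ⟨C ++ D, ⟨C, hC, D, hD, rfl⟩, ?_⟩
    intro A hA
    rcases List.mem_append.mp hA with h | h
    exacts [h1 A h, h2 A h]

def Atom.neg {n} (A : Atom n) : Atom n := ⟨fun i => -A.a i, -A.c, !A.strict⟩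

theorem Atom.holds_neg {n} (A : Atom n) (v : Fin n → ℝ) :
    A.neg.Holds v ↔ ¬ A.Holds v := by
  have hl : A.neg.lhs v = -A.lhs v := by
    simp only [Atom.lhs, Atom.neg, Rat.cast_neg, neg_mul, Finset.sum_neg_distrib]
    ring
  have hst : A.neg.strict = !A.strict := rfl
  rw [Atom.Holds, Atom.Holds, hst, hl]
  cases A.strict <;> simp <;> constructor <;> intro h <;> linarith

def DNF.neg {n} : DNF n → DNF n
  | [] => [[]]
  | C :: rest => DNF.and (C.map fun A => [A.neg]) (DNF.neg rest)

theorem DNF.sem_neg {n} (φ : DNF n) (v : Fin n → ℝ) :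
    φ.neg.Sem v ↔ ¬ φ.Sem v := by
  induction φ with
  | nil => simp [DNF.neg, DNF.Sem]
  | cons C rest ih =>
    rw [DNF.neg, DNF.sem_and, ih]
    have h1 : DNF.Sem (C.map fun A => [A.neg]) v ↔ ¬ (∀ A ∈ C, A.Holds v) := by
      simp only [DNF.Sem, List.mem_map, not_forall]
      constructor
      · rintro ⟨D, ⟨A, hA, rfl⟩, h⟩
        exact ⟨A, hA, (Atom.holds_neg A v).mp (h _ (List.mem_singleton_self _))⟩
      · rintro ⟨A, hA, h⟩
        exact ⟨[A.neg], ⟨A, hA, rfl⟩, by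
          intro B hB; rw [List.mem_singleton] at hB; subst hB
          exact (Atom.holds_neg A v).mpr h⟩
    rw [h1]
    simp only [DNF.Sem]
    constructor
    · rintro ⟨h1, h2⟩ ⟨D, hD, h⟩
      rcases List.mem_cons.mp hD with rfl | hD
      · exact h1 h
      · exact h2 ⟨D, hD, h⟩
    · intro h
      constructor
      · intro hC; exact h ⟨C, List.mem_cons_self, hC⟩
      · rintro ⟨D, hD, hh⟩; exact h ⟨D, List.mem_cons_of_mem _ hD, hh⟩

-- reindex
def Atom.reindex {n m} (sgm : Fin n → Fin m) (A : Atom n) : Atom m :=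
  ⟨fun j => ∑ i ∈ Finset.univ.filter fun i => sgm i = j, A.a i, A.c, A.strict⟩

theorem Atom.lhs_reindex {n m} (sgm : Fin n → Fin m) (A : Atom n) (v : Fin m → ℝ) :
    (A.reindex sgm).lhs v = A.lhs (v ∘ sgm) := by
  simp only [Atom.lhs, Atom.reindex, Function.comp]
  congr 1
  push_cast
  rw [← Finset.sum_fiberwise (g := sgm) (f := fun i => (A.a i : ℝ) * v (sgm i))]
  congr 1; funext j
  rw [Finset.sum_mul]
  apply Finset.sum_congr rfl
  intro i hi
  simp only [Finset.mem_filter] at hi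
  rw [hi.2]

theorem Atom.holds_reindex {n m} (sgm : Fin n → Fin m) (A : Atom n) (v : Fin m → ℝ) :
    (A.reindex sgm).Holds v ↔ A.Holds (v ∘ sgm) := by
  have : (A.reindex sgm).strict = A.strict := rfl
  rw [Atom.Holds, Atom.Holds, this, Atom.lhs_reindex]

-- 3-coordinate atom builder
def atom3 {m} (j₁ j₂ j₃ : Fin m) (c₁ c₂ c₃ c : ℚ) (s : Bool) : Atom m :=
  ⟨fun i => (if i = j₁ then c₁ else 0) + (if i = j₂ then c₂ else 0) + (if i = j₃ then c₃ else 0),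
   c, s⟩

theorem atom3_lhs {m} (j₁ j₂ j₃ : Fin m) (c₁ c₂ c₃ c : ℚ) (s : Bool) (v : Fin m → ℝ) :
    (atom3 j₁ j₂ j₃ c₁ c₂ c₃ c s).lhs v
      = c₁ * v j₁ + c₂ * v j₂ + c₃ * v j₃ + c := by
  simp only [Atom.lhs, atom3]
  have : ∀ i : Fin m,
      ((((if i = j₁ then c₁ else 0) + (if i = j₂ then c₂ else 0) +
        (if i = j₃ then c₃ else 0) : ℚ) : ℝ)) * v i
      = (if i = j₁ then (c₁:ℝ) * v i else 0) + (if i = j₂ then (c₂:ℝ) * v i else 0) +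
        (if i = j₃ then (c₃:ℝ) * v i else 0) := by
    intro i
    push_cast
    split <;> split <;> split <;> ring
  rw [Finset.sum_congr rfl fun i _ => this i]
  rw [Finset.sum_add_distrib, Finset.sum_add_distrib]
  simp [Finset.sum_ite_eq']


end SL
namespace FM
open SL
variable {n : ℕ}

theorem exists_dom_lower :
    ∀ (Ls : List (ℝ × Bool)), Ls ≠ [] →
      ∃ l' ∈ Ls, ∀ l ∈ Ls, l.1 < l'.1 ∨ (l.1 = l'.1 ∧ (l.2 = true → l'.2 = true)) := by
  intro Ls
  induction Ls with
  | nil => intro h; exact absurd rfl h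
  | cons a t ih =>
    intro _
    rcases eq_or_ne t [] with rfl | ht
    · exact ⟨a, List.mem_cons_self, by
        intro l hl
        rcases List.mem_cons.mp hl with rfl | h
        · exact Or.inr ⟨rfl, fun h => h⟩
        · simp at h⟩
    · obtain ⟨d, hd, hdom⟩ := ih ht
      rcases lt_trichotomy a.1 d.1 with h | h | h
      · refine ⟨d, List.mem_cons_of_mem _ hd, ?_⟩
        intro l hl
        rcases List.mem_cons.mp hl with rfl | hl
        · exact Or.inl h
        · exact hdom l hl
      · -- equal firsts: pick the one that is strict if any
        by_cases hs : a.2 = true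
        · refine ⟨a, List.mem_cons_self, ?_⟩
          intro l hl
          rcases List.mem_cons.mp hl with rfl | hl
          · exact Or.inr ⟨rfl, fun h => h⟩
          · rcases hdom l hl with h' | ⟨h1, h2⟩
            · exact Or.inl (by linarith)
            · exact Or.inr ⟨by linarith, fun _ => hs⟩
        · refine ⟨d, List.mem_cons_of_mem _ hd, ?_⟩
          intro l hl
          rcases List.mem_cons.mp hl with rfl | hl
          · exact Or.inr ⟨h, fun hh => absurd hh hs⟩
          · exact hdom l hl
      · refine ⟨a, List.mem_cons_self, ?_⟩
        intro l hl
        rcases List.mem_cons.mp hl with rfl | hl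
        · exact Or.inr ⟨rfl, fun h => h⟩
        · rcases hdom l hl with h' | ⟨h1, h2⟩
          · exact Or.inl (by linarith)
          · exact Or.inl (by linarith)

theorem exists_dom_upper (Us : List (ℝ × Bool)) (h : Us ≠ []) :
    ∃ u' ∈ Us, ∀ u ∈ Us, u'.1 < u.1 ∨ (u.1 = u'.1 ∧ (u.2 = true → u'.2 = true)) := by
  obtain ⟨d, hd, hdom⟩ := exists_dom_lower (Us.map fun p => (-p.1, p.2)) (by simpa using h)
  rcases List.mem_map.mp hd with ⟨u', hu', rfl⟩
  refine ⟨u', hu', ?_⟩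
  intro u hu
  have := hdom (-u.1, u.2) (List.mem_map.mpr ⟨u, hu, rfl⟩)
  rcases this with h' | ⟨h1, h2⟩
  · exact Or.inl (by simp at h'; linarith)
  · exact Or.inr ⟨by simp at h1; linarith, h2⟩

def SatL (x : ℝ) (l : ℝ × Bool) : Prop := if l.2 then l.1 < x else l.1 ≤ x
def SatU (x : ℝ) (u : ℝ × Bool) : Prop := if u.2 then x < u.1 else x ≤ u.1

theorem exists_between (Ls Us : List (ℝ × Bool))
    (h : ∀ l ∈ Ls, ∀ u ∈ Us,
      if (l.2 || u.2) then l.1 < u.1 else l.1 ≤ u.1) :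
    ∃ x : ℝ, (∀ l ∈ Ls, SatL x l) ∧ (∀ u ∈ Us, SatU x u) := by
  rcases eq_or_ne Ls [] with rfl | hL
  · rcases eq_or_ne Us [] with rfl | hU
    · exact ⟨0, by simp, by simp⟩
    · obtain ⟨u', hu', hdom⟩ := exists_dom_upper Us hU
      refine ⟨u'.1 - 1, by simp, ?_⟩
      intro u hu
      have hlt : u'.1 - 1 < u.1 := by
        rcases hdom u hu with h' | ⟨h1, _⟩ <;> linarith
      unfold SatU; split <;> linarith
  · obtain ⟨l', hl', hdomL⟩ := exists_dom_lower Ls hL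
    rcases eq_or_ne Us [] with rfl | hU
    · refine ⟨l'.1 + 1, ?_, by simp⟩
      intro l hl
      have : l.1 < l'.1 + 1 := by
        rcases hdomL l hl with h' | ⟨h1, _⟩ <;> linarith
      unfold SatL; split <;> linarith
    · obtain ⟨u', hu', hdomU⟩ := exists_dom_upper Us hU
      have hkey := h l' hl' u' hu'
      by_cases hs : (l'.2 || u'.2) = true
      · rw [if_pos hs] at hkey
        refine ⟨(l'.1 + u'.1)/2, ?_, ?_⟩
        · intro l hl
          have : l.1 < (l'.1 + u'.1)/2 := by
            rcases hdomL l hl with h' | ⟨h1, _⟩ <;> linarith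
          unfold SatL; split <;> linarith
        · intro u hu
          have : (l'.1 + u'.1)/2 < u.1 := by
            rcases hdomU u hu with h' | ⟨h1, _⟩ <;> linarith
          unfold SatU; split <;> linarith
      · have hls : l'.2 = false := by
          cases hl2 : l'.2 <;> simp [hl2] at hs ⊢
        have hus : u'.2 = false := by
          cases hu2 : u'.2 <;> simp [hu2] at hs ⊢
        rw [hls, hus] at hkey; simp at hkey
        refine ⟨l'.1, ?_, ?_⟩
        · intro l hl
          rcases hdomL l hl with h' | ⟨h1, h2⟩
          · unfold SatL; split <;> linarith
          · have : l.2 = false := by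
              cases hl2 : l.2
              · rfl
              · exact absurd (h2 hl2) (by simp [hls])
            unfold SatL; rw [this]; simp; linarith
        · intro u hu
          rcases hdomU u hu with h' | ⟨h1, h2⟩
          · unfold SatU; split <;> linarith
          · have : u.2 = false := by
              cases hu2 : u.2
              · rfl
              · exact absurd (h2 hu2) (by simp [hus])
            unfold SatU; rw [this]; simp; linarith

end FM

-- Fourier–Motzkin elimination of the last variable
namespace FM
open SL

variable {n : ℕ}

def Atom.drop (A : Atom (n+1)) : Atom n := ⟨A.a ∘ Fin.castSucc, A.c, A.strict⟩

theorem lhs_snoc (A : Atom (n+1)) (v : Fin n → ℝ) (x : ℝ) :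
    A.lhs (Fin.snoc v x) = (Atom.drop A).lhs v + (A.a (Fin.last n) : ℝ) * x := by
  simp only [SL.Atom.lhs, Atom.drop, Function.comp, Fin.sum_univ_castSucc,
    Fin.snoc_castSucc, Fin.snoc_last]
  ring

/-- Bound value for elimination. -/
noncomputable def bval (A : Atom (n+1)) (v : Fin n → ℝ) : ℝ :=
  -((Atom.drop A).lhs v) / ((A.a (Fin.last n) : ℝ))

theorem holds_snoc_zero (A : Atom (n+1)) (hp : A.a (Fin.last n) = 0)
    (v : Fin n → ℝ) (x : ℝ) :
    A.Holds (Fin.snoc v x) ↔ (Atom.drop A).Holds v := by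
  have hs : (Atom.drop A).strict = A.strict := rfl
  rw [SL.Atom.Holds, SL.Atom.Holds, hs, lhs_snoc, hp]
  norm_num

theorem holds_snoc_pos (A : Atom (n+1)) (hp : 0 < A.a (Fin.last n))
    (v : Fin n → ℝ) (x : ℝ) :
    A.Holds (Fin.snoc v x) ↔ (if A.strict then bval A v < x else bval A v ≤ x) := by
  have hp' : (0:ℝ) < (A.a (Fin.last n) : ℝ) := by exact_mod_cast hp
  rw [SL.Atom.Holds, lhs_snoc, bval]
  rw [div_lt_iff₀ hp', div_le_iff₀ hp']
  cases A.strict <;> simp <;> constructor <;> intro h <;> nlinarith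

theorem holds_snoc_neg (A : Atom (n+1)) (hp : A.a (Fin.last n) < 0)
    (v : Fin n → ℝ) (x : ℝ) :
    A.Holds (Fin.snoc v x) ↔ (if A.strict then x < bval A v else x ≤ bval A v) := by
  have hp' : ((A.a (Fin.last n) : ℝ)) < 0 := by exact_mod_cast hp
  have hp'' : (0:ℝ) < -(A.a (Fin.last n) : ℝ) := by linarith
  rw [SL.Atom.Holds, lhs_snoc, bval]
  have h1 : -((Atom.drop A).lhs v) / ((A.a (Fin.last n) : ℝ))
      = ((Atom.drop A).lhs v) / (-(A.a (Fin.last n) : ℝ)) := by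
    rw [div_neg, neg_div]
  rw [h1, lt_div_iff₀ hp'', le_div_iff₀ hp'']
  cases A.strict <;> simp <;> constructor <;> intro h <;> nlinarith

/-- Combined atom of a lower bound `A` (positive last coeff) and upper bound `B`
(negative last coeff). -/
def comb (A B : Atom (n+1)) : Atom n :=
  ⟨fun i => -B.a (Fin.last n) * A.a i.castSucc + A.a (Fin.last n) * B.a i.castSucc,
   -B.a (Fin.last n) * A.c + A.a (Fin.last n) * B.c, A.strict || B.strict⟩

theorem comb_lhs (A B : Atom (n+1)) (v : Fin n → ℝ) :
    (comb A B).lhs v = (-(B.a (Fin.last n)) : ℚ) * (Atom.drop A).lhs v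
      + ((A.a (Fin.last n)) : ℚ) * (Atom.drop B).lhs v := by
  simp only [SL.Atom.lhs, comb, Atom.drop, Function.comp]
  have h : ∀ i : Fin n,
      ((( -B.a (Fin.last n) * A.a i.castSucc + A.a (Fin.last n) * B.a i.castSucc : ℚ)):ℝ) * v i
      = (-(B.a (Fin.last n)):ℝ) * ((A.a i.castSucc : ℝ) * v i)
        + ((A.a (Fin.last n)):ℝ) * ((B.a i.castSucc : ℝ) * v i) := by
    intro i; push_cast; ring
  rw [Finset.sum_congr rfl fun i _ => h i, Finset.sum_add_distrib,
    ← Finset.mul_sum, ← Finset.mul_sum]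
  push_cast
  ring

theorem comb_holds (A B : Atom (n+1)) (hp : 0 < A.a (Fin.last n))
    (hq : B.a (Fin.last n) < 0) (v : Fin n → ℝ) :
    (comb A B).Holds v ↔
      (if A.strict || B.strict then bval A v < bval B v else bval A v ≤ bval B v) := by
  have hp' : (0:ℝ) < (A.a (Fin.last n) : ℝ) := by exact_mod_cast hp
  have hq' : ((B.a (Fin.last n)) : ℝ) < 0 := by exact_mod_cast hq
  have hq'' : (0:ℝ) < -(B.a (Fin.last n) : ℝ) := by linarith
  have hs : (comb A B).strict = (A.strict || B.strict) := rfl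
  rw [SL.Atom.Holds, hs, comb_lhs, bval, bval]
  have h1 : -((Atom.drop B).lhs v) / ((B.a (Fin.last n) : ℝ))
      = ((Atom.drop B).lhs v) / (-(B.a (Fin.last n) : ℝ)) := by rw [div_neg, neg_div]
  rw [h1, div_lt_div_iff₀ hp' hq'', div_le_div_iff₀ hp' hq'']
  push_cast
  cases A.strict <;> cases B.strict <;> simp <;> constructor <;> intro h <;> nlinarith

end FM

namespace FM
open SL
variable {n : ℕ}

def elimConj (C : List (Atom (n+1))) : List (Atom n) :=
  ((C.filter fun A => decide (A.a (Fin.last n) = 0)).map Atom.drop)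
  ++ ((C.filter fun A => decide (0 < A.a (Fin.last n))).flatMap fun A =>
       (C.filter fun B => decide (B.a (Fin.last n) < 0)).map fun B => comb A B)

theorem elimConj_correct (C : List (Atom (n+1))) (v : Fin n → ℝ) :
    (∀ D ∈ elimConj C, D.Holds v) ↔ ∃ x : ℝ, ∀ A ∈ C, A.Holds (Fin.snoc v x) := by
  constructor
  · intro hall
    set Ls : List (ℝ × Bool) :=
      (C.filter fun A => decide (0 < A.a (Fin.last n))).map fun A => (bval A v, A.strict)
      with hLs
    set Us : List (ℝ × Bool) :=
      (C.filter fun B => decide (B.a (Fin.last n) < 0)).map fun B => (bval B v, B.strict)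
      with hUs
    have hpair : ∀ l ∈ Ls, ∀ u ∈ Us,
        if (l.2 || u.2) then l.1 < u.1 else l.1 ≤ u.1 := by
      intro l hl u hu
      rcases List.mem_map.mp hl with ⟨A, hA, rfl⟩
      rcases List.mem_map.mp hu with ⟨B, hB, rfl⟩
      have hA' := List.mem_filter.mp hA
      have hB' := List.mem_filter.mp hB
      have hp : 0 < A.a (Fin.last n) := by simpa using hA'.2
      have hq : B.a (Fin.last n) < 0 := by simpa using hB'.2
      have hmem : comb A B ∈ elimConj C := by
        apply List.mem_append_right
        apply List.mem_flatMap.mpr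
        exact ⟨A, hA, List.mem_map.mpr ⟨B, hB, rfl⟩⟩
      have := hall _ hmem
      rw [comb_holds A B hp hq v] at this
      exact this
    obtain ⟨x, hx1, hx2⟩ := exists_between Ls Us hpair
    refine ⟨x, ?_⟩
    intro A hA
    rcases lt_trichotomy (A.a (Fin.last n)) 0 with hp | hp | hp
    · have hmem : (bval A v, A.strict) ∈ Us :=
        List.mem_map.mpr ⟨A, List.mem_filter.mpr ⟨hA, by simpa using hp⟩, rfl⟩
      have := hx2 _ hmem
      rw [holds_snoc_neg A hp v x]
      exact this
    · have hmem : Atom.drop A ∈ elimConj C := by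
        apply List.mem_append_left
        exact List.mem_map.mpr ⟨A, List.mem_filter.mpr ⟨hA, by simpa using hp⟩, rfl⟩
      rw [holds_snoc_zero A hp v x]
      exact hall _ hmem
    · have hmem : (bval A v, A.strict) ∈ Ls :=
        List.mem_map.mpr ⟨A, List.mem_filter.mpr ⟨hA, by simpa using hp⟩, rfl⟩
      have := hx1 _ hmem
      rw [holds_snoc_pos A hp v x]
      exact this
  · rintro ⟨x, hx⟩ D hD
    rcases List.mem_append.mp hD with hD | hD
    · rcases List.mem_map.mp hD with ⟨A, hA, rfl⟩
      have hA' := List.mem_filter.mp hA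
      have hp : A.a (Fin.last n) = 0 := by simpa using hA'.2
      exact (holds_snoc_zero A hp v x).mp (hx A hA'.1)
    · rcases List.mem_flatMap.mp hD with ⟨A, hA, hD⟩
      rcases List.mem_map.mp hD with ⟨B, hB, rfl⟩
      have hA' := List.mem_filter.mp hA
      have hB' := List.mem_filter.mp hB
      have hp : 0 < A.a (Fin.last n) := by simpa using hA'.2
      have hq : B.a (Fin.last n) < 0 := by simpa using hB'.2
      have h1 := (holds_snoc_pos A hp v x).mp (hx A hA'.1)
      have h2 := (holds_snoc_neg B hq v x).mp (hx B hB'.1)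
      rw [comb_holds A B hp hq v]
      cases hsa : A.strict <;> cases hsb : B.strict <;>
        rw [hsa] at h1 <;> rw [hsb] at h2 <;> simp at h1 h2 ⊢ <;> linarith

def projLastDNF (φ : DNF (n+1)) : DNF n := φ.map elimConj

theorem projLastDNF_sem (φ : DNF (n+1)) (v : Fin n → ℝ) :
    (projLastDNF φ).Sem v ↔ ∃ x : ℝ, φ.Sem (Fin.snoc v x) := by
  simp only [DNF.Sem, projLastDNF, List.mem_map]
  constructor
  · rintro ⟨D, ⟨C, hC, rfl⟩, h⟩
    obtain ⟨x, hx⟩ := (elimConj_correct C v).mp h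
    exact ⟨x, C, hC, hx⟩
  · rintro ⟨x, C, hC, h⟩
    exact ⟨elimConj C, ⟨C, hC, rfl⟩, (elimConj_correct C v).mpr ⟨x, h⟩⟩

end FM
namespace SL

/-- Semilinear subsets of `ℝⁿ` with rational coefficients. -/
def IsSL {n : ℕ} (s : Set (Fin n → ℝ)) : Prop :=
  ∃ φ : DNF n, ∀ v, v ∈ s ↔ φ.Sem v

namespace IsSL

theorem union {n} {s t : Set (Fin n → ℝ)} (hs : IsSL s) (ht : IsSL t) :
    IsSL (s ∪ t) := by
  obtain ⟨φ, hφ⟩ := hs; obtain ⟨ψ, hψ⟩ := ht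
  exact ⟨φ.or ψ, fun v => by rw [Set.mem_union, hφ, hψ, DNF.sem_or]⟩

theorem inter {n} {s t : Set (Fin n → ℝ)} (hs : IsSL s) (ht : IsSL t) :
    IsSL (s ∩ t) := by
  obtain ⟨φ, hφ⟩ := hs; obtain ⟨ψ, hψ⟩ := ht
  exact ⟨φ.and ψ, fun v => by rw [Set.mem_inter_iff, hφ, hψ, DNF.sem_and]⟩

theorem compl {n} {s : Set (Fin n → ℝ)} (hs : IsSL s) : IsSL sᶜ := by
  obtain ⟨φ, hφ⟩ := hs
  exact ⟨φ.neg, fun v => by rw [Set.mem_compl_iff, hφ, DNF.sem_neg]⟩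

theorem reindex {n m} (sgm : Fin n → Fin m) {s : Set (Fin n → ℝ)} (hs : IsSL s) :
    IsSL {v : Fin m → ℝ | v ∘ sgm ∈ s} := by
  obtain ⟨φ, hφ⟩ := hs
  refine ⟨φ.map fun C => C.map (Atom.reindex sgm), fun v => ?_⟩
  rw [Set.mem_setOf_eq, hφ]
  simp only [DNF.Sem, List.mem_map]
  constructor
  · rintro ⟨C, hC, h⟩
    refine ⟨C.map (Atom.reindex sgm), ⟨C, hC, rfl⟩, ?_⟩
    rintro A hA
    rcases List.mem_map.mp hA with ⟨B, hB, rfl⟩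
    exact (Atom.holds_reindex sgm B v).mpr (h B hB)
  · rintro ⟨D, ⟨C, hC, rfl⟩, h⟩
    exact ⟨C, hC, fun A hA =>
      (Atom.holds_reindex sgm A v).mp (h _ (List.mem_map.mpr ⟨A, hA, rfl⟩))⟩

theorem proj {n} {s : Set (Fin (n+1) → ℝ)} (hs : IsSL s) :
    IsSL {v : Fin n → ℝ | ∃ x : ℝ, Fin.snoc v x ∈ s} := by
  obtain ⟨φ, hφ⟩ := hs
  refine ⟨FM.projLastDNF φ, fun v => ?_⟩
  rw [Set.mem_setOf_eq]
  rw [FM.projLastDNF_sem]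
  exact exists_congr fun x => hφ _

end IsSL
end SL
namespace SL

theorem atom3_holds {m} (j₁ j₂ j₃ : Fin m) (c₁ c₂ c₃ c : ℚ) (s : Bool) (v : Fin m → ℝ) :
    (atom3 j₁ j₂ j₃ c₁ c₂ c₃ c s).Holds v ↔
      (if s then 0 < (c₁:ℝ) * v j₁ + c₂ * v j₂ + c₃ * v j₃ + c
       else 0 ≤ (c₁:ℝ) * v j₁ + c₂ * v j₂ + c₃ * v j₃ + c) := by
  have hs : (atom3 j₁ j₂ j₃ c₁ c₂ c₃ c s).strict = s := rfl
  rw [Atom.Holds, hs, atom3_lhs]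

theorem sem_single {m} (A : Atom m) (v : Fin m → ℝ) :
    DNF.Sem [[A]] v ↔ A.Holds v := by simp [DNF.Sem]

theorem isSL_le3 {m} (j₁ j₂ j₃ : Fin m) (c₁ c₂ c₃ c : ℚ) :
    IsSL {v : Fin m → ℝ | 0 ≤ (c₁:ℝ) * v j₁ + c₂ * v j₂ + c₃ * v j₃ + c} :=
  ⟨[[atom3 j₁ j₂ j₃ c₁ c₂ c₃ c false]], fun v => by
    rw [Set.mem_setOf_eq, sem_single, atom3_holds]; simp⟩

theorem isSL_lt3 {m} (j₁ j₂ j₃ : Fin m) (c₁ c₂ c₃ c : ℚ) :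
    IsSL {v : Fin m → ℝ | 0 < (c₁:ℝ) * v j₁ + c₂ * v j₂ + c₃ * v j₃ + c} :=
  ⟨[[atom3 j₁ j₂ j₃ c₁ c₂ c₃ c true]], fun v => by
    rw [Set.mem_setOf_eq, sem_single, atom3_holds]; simp⟩

theorem isSL_bndAll (m : ℕ) : IsSL {v : Fin m → ℝ | ∀ j, 0 ≤ v j ∧ v j ≤ 1} := by
  refine ⟨[(List.finRange m).flatMap fun j =>
    [atom3 j j j 1 0 0 0 false, atom3 j j j (-1) 0 0 1 false]], fun v => ?_⟩
  simp only [DNF.Sem, List.mem_singleton, exists_eq_left, Set.mem_setOf_eq,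
    List.mem_flatMap, List.mem_finRange]
  constructor
  · intro h
    rintro A ⟨j, -, hA⟩
    rcases List.mem_cons.mp hA with rfl | hA
    · rw [atom3_holds]; simp; linarith [(h j).1]
    · rcases List.mem_cons.mp hA with rfl | hA
      · rw [atom3_holds]; simp; linarith [(h j).2]
      · simp at hA
  · intro h j
    have h1 := h _ ⟨j, trivial, List.mem_cons_self⟩
    have h2 := h _ ⟨j, trivial, List.mem_cons_of_mem _ List.mem_cons_self⟩
    rw [atom3_holds] at h1 h2
    simp at h1 h2
    constructor <;> linarith

end SL


-- Knaster–Tarski facts in the complete lattice I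
theorem kt_mu (f : I → I) (hf : Monotone f) :
    f (sInf {x | f x ≤ x}) = sInf {x | f x ≤ x} ∧
      ∀ y, f y ≤ y → sInf {x | f x ≤ x} ≤ y := by
  set z := sInf {x | f x ≤ x} with hz
  have hle : ∀ y, f y ≤ y → z ≤ y := fun y hy => sInf_le hy
  have h1 : f z ≤ z := by
    apply le_sInf
    intro y hy
    exact le_trans (hf (hle y hy)) hy
  have h2 : z ≤ f z := hle _ (hf h1)
  exact ⟨le_antisymm h1 h2, hle⟩

theorem kt_nu (f : I → I) (hf : Monotone f) :
    f (sSup {x | x ≤ f x}) = sSup {x | x ≤ f x} ∧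
      ∀ y, y ≤ f y → y ≤ sSup {x | x ≤ f x} := by
  set z := sSup {x | x ≤ f x} with hz
  have hle : ∀ y, y ≤ f y → y ≤ z := fun y hy => le_sSup hy
  have h1 : z ≤ f z := by
    apply sSup_le
    intro y hy
    exact le_trans hy (hf (hle y hy))
  have h2 : f z ≤ z := hle _ (hf h1)
  exact ⟨le_antisymm h2 h1, hle⟩

theorem mu_unique (f : I → I) (hf : Monotone f) (z : I)
    (h1 : f z = z) (h2 : ∀ y, f y ≤ y → z ≤ y) :
    z = sInf {x | f x ≤ x} := by
  obtain ⟨k1, k2⟩ := kt_mu f hf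
  exact le_antisymm (h2 _ (le_of_eq k1)) (k2 _ (le_of_eq h1))

theorem nu_unique (f : I → I) (hf : Monotone f) (z : I)
    (h1 : f z = z) (h2 : ∀ y, y ≤ f y → y ≤ z) :
    z = sSup {x | x ≤ f x} := by
  obtain ⟨k1, k2⟩ := kt_nu f hf
  exact le_antisymm (k2 _ (ge_of_eq h1)) (h2 _ (le_of_eq k1.symm))

theorem snoc_le_snoc {n} {ρ ρ' : Fin n → I} {x x' : I}
    (h : ρ ≤ ρ') (hx : x ≤ x') : (Fin.snoc ρ x : Fin (n+1) → I) ≤ Fin.snoc ρ' x' := by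
  intro i
  refine Fin.lastCases ?_ ?_ i
  · simpa using hx
  · intro j; simpa using h j

theorem eval_mono : ∀ {n} (t : LTerm n), Monotone t.eval := by
  intro n t
  induction t with
  | var i => exact fun ρ ρ' h => h i
  | scal q t ih =>
    intro ρ ρ' h
    simp only [LTerm.eval, lukScal]
    rw [← Subtype.coe_le_coe]
    exact mul_le_mul_of_nonneg_left (Subtype.coe_le_coe.mpr (ih h)) (by exact_mod_cast q.2.1)
  | join t₁ t₂ ih₁ ih₂ =>
    intro ρ ρ' h
    exact max_le_max (ih₁ h) (ih₂ h)
  | meet t₁ t₂ ih₁ ih₂ =>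
    intro ρ ρ' h
    exact min_le_min (ih₁ h) (ih₂ h)
  | oplus t₁ t₂ ih₁ ih₂ =>
    intro ρ ρ' h
    simp only [LTerm.eval, lukAdd]
    rw [← Subtype.coe_le_coe]
    exact min_le_min le_rfl (add_le_add (Subtype.coe_le_coe.mpr (ih₁ h)) (Subtype.coe_le_coe.mpr (ih₂ h)))
  | odot t₁ t₂ ih₁ ih₂ =>
    intro ρ ρ' h
    simp only [LTerm.eval, lukMul]
    rw [← Subtype.coe_le_coe]
    exact max_le_max le_rfl (by
      have := Subtype.coe_le_coe.mpr (ih₁ h)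
      have := Subtype.coe_le_coe.mpr (ih₂ h)
      linarith)
  | mu t ih =>
    intro ρ ρ' h
    simp only [LTerm.eval]
    have hmono : Monotone fun x : I => t.eval (Fin.snoc ρ' x) :=
      fun x x' hx => ih (snoc_le_snoc (le_refl ρ') hx)
    obtain ⟨k1, _⟩ := kt_mu _ hmono
    apply sInf_le
    show t.eval (Fin.snoc ρ (sInf {x | t.eval (Fin.snoc ρ' x) ≤ x})) ≤ _
    exact le_trans (ih (snoc_le_snoc h (le_refl _))) (le_of_eq k1)
  | nu t ih =>
    intro ρ ρ' h
    simp only [LTerm.eval]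
    have hmono : Monotone fun x : I => t.eval (Fin.snoc ρ x) :=
      fun x x' hx => ih (snoc_le_snoc (le_refl ρ) hx)
    obtain ⟨k1, _⟩ := kt_nu _ hmono
    apply le_sSup
    show (sSup {x | x ≤ t.eval (Fin.snoc ρ x)}) ≤ t.eval (Fin.snoc ρ' _)
    exact le_trans (le_of_eq k1.symm) (ih (snoc_le_snoc h (le_refl _)))
open SL

def egraph {n : ℕ} (t : LTerm n) : Set (Fin (n+1) → ℝ) :=
  {v | ∃ ρ : Fin n → I, (∀ i : Fin n, v i.castSucc = (ρ i : ℝ)) ∧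
        v (Fin.last n) = (t.eval ρ : ℝ)}

theorem isSL_congr {m} {s s' : Set (Fin m → ℝ)} (h : IsSL s) (e : s = s') : IsSL s' := e ▸ h

/-- first embedding `Fin (n+1) → Fin (n+3)`: params to params, last to `n+1`. -/
def emb1 (n : ℕ) : Fin (n+1) → Fin (n+3) :=
  Fin.snoc (fun i : Fin n => i.castSucc.castSucc.castSucc) (Fin.last (n+1)).castSucc

/-- second embedding: params to params, last to `n+2`. -/
def emb2 (n : ℕ) : Fin (n+1) → Fin (n+3) :=
  Fin.snoc (fun i : Fin n => i.castSucc.castSucc.castSucc) (Fin.last (n+2))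

theorem isSL_binary {n} {t t₁ t₂ : LTerm n} (op : I → I → I)
    (heval : ∀ ρ, t.eval ρ = op (t₁.eval ρ) (t₂.eval ρ))
    (h₁ : IsSL (egraph t₁)) (h₂ : IsSL (egraph t₂))
    (Rp : ℝ → ℝ → ℝ → Prop)
    (hR : IsSL {w : Fin (n+3) → ℝ |
      Rp (w (Fin.last n).castSucc.castSucc) (w (Fin.last (n+1)).castSucc) (w (Fin.last (n+2)))})
    (hfwd : ∀ a b : I, Rp ((op a b : I) : ℝ) ((a : I) : ℝ) ((b : I) : ℝ))
    (huniq : ∀ (a b : I) (z : ℝ), Rp z a b → z = ((op a b : I) : ℝ)) :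
    IsSL (egraph t) := by
  have hS : IsSL ({w : Fin (n+3) → ℝ | w ∘ emb1 n ∈ egraph t₁} ∩
      ({w | w ∘ emb2 n ∈ egraph t₂} ∩ {w |
        Rp (w (Fin.last n).castSucc.castSucc) (w (Fin.last (n+1)).castSucc) (w (Fin.last (n+2)))})) :=
    IsSL.inter (IsSL.reindex _ h₁) (IsSL.inter (IsSL.reindex _ h₂) hR)
  refine isSL_congr (IsSL.proj (IsSL.proj hS)) ?_
  ext v
  simp only [Set.mem_setOf_eq, Set.mem_inter_iff]
  constructor
  · rintro ⟨x, y, ⟨hm1, hm2, hr⟩⟩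
    obtain ⟨ρ₁, hρ₁, hx⟩ := hm1
    obtain ⟨ρ₂, hρ₂, hy⟩ := hm2
    have e1 : ∀ i : Fin n, v i.castSucc = (ρ₁ i : ℝ) := by
      intro i
      have := hρ₁ i
      simpa [emb1, Function.comp, Fin.snoc_castSucc, Fin.snoc_last] using this
    have e2 : ∀ i : Fin n, v i.castSucc = (ρ₂ i : ℝ) := by
      intro i
      have := hρ₂ i
      simpa [emb2, Function.comp, Fin.snoc_castSucc, Fin.snoc_last] using this
    have hρeq : ρ₂ = ρ₁ := by
      funext i; exact Subtype.ext ((e2 i).symm.trans (e1 i))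
    have hx' : x = (t₁.eval ρ₁ : ℝ) := by
      have := hx
      simpa [emb1, Function.comp, Fin.snoc_castSucc, Fin.snoc_last] using this
    have hy' : y = (t₂.eval ρ₁ : ℝ) := by
      rw [← hρeq]
      have := hy
      simpa [emb2, Function.comp, Fin.snoc_castSucc, Fin.snoc_last] using this
    have hr' : Rp (v (Fin.last n)) x y := by
      have := hr
      simpa [Fin.snoc_castSucc, Fin.snoc_last] using this
    refine ⟨ρ₁, e1, ?_⟩
    rw [heval]
    apply huniq
    rw [← hx', ← hy'] at *
    exact hr'
  · rintro ⟨ρ, hρ, hz⟩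
    refine ⟨(t₁.eval ρ : ℝ), (t₂.eval ρ : ℝ), ?_, ?_, ?_⟩
    · exact ⟨ρ, by
        intro i
        simp only [emb1, Function.comp, Fin.snoc_castSucc]
        simpa using hρ i,
        by simp [emb1, Function.comp, Fin.snoc_castSucc, Fin.snoc_last]⟩
    · exact ⟨ρ, by
        intro i
        simp only [emb2, Function.comp, Fin.snoc_castSucc]
        simpa using hρ i,
        by simp [emb2, Function.comp, Fin.snoc_castSucc, Fin.snoc_last]⟩
    · have := hfwd (t₁.eval ρ) (t₂.eval ρ)
      simp only [Fin.snoc_castSucc, Fin.snoc_last]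
      rw [hz, heval]
      exact this
-- basic SL building blocks
theorem isSL_le_coord {m} (j k : Fin m) : IsSL {w : Fin m → ℝ | w j ≤ w k} :=
  isSL_congr (isSL_le3 k j j 1 (-1) 0 0)
    (by ext w; simp only [Set.mem_setOf_eq]; push_cast; constructor <;> intro <;> linarith)

theorem isSL_lt_coord {m} (j k : Fin m) : IsSL {w : Fin m → ℝ | w j < w k} :=
  isSL_congr (isSL_lt3 k j j 1 (-1) 0 0)
    (by ext w; simp only [Set.mem_setOf_eq]; push_cast; constructor <;> intro <;> linarith)

theorem isSL_le_pairc {m} (j k l : Fin m) (q : ℚ) :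
    IsSL {w : Fin m → ℝ | w j ≤ w k + w l + (q:ℝ)} :=
  isSL_congr (isSL_le3 k l j 1 1 (-1) q)
    (by ext w; simp only [Set.mem_setOf_eq]; push_cast; constructor <;> intro <;> linarith)

theorem isSL_pairc_le {m} (j k l : Fin m) (q : ℚ) :
    IsSL {w : Fin m → ℝ | w k + w l + (q:ℝ) ≤ w j} :=
  isSL_congr (isSL_le3 j k l 1 (-1) (-1) (-q))
    (by ext w; simp only [Set.mem_setOf_eq]; push_cast; constructor <;> intro <;> linarith)

theorem isSL_le_const {m} (j : Fin m) (q : ℚ) : IsSL {w : Fin m → ℝ | w j ≤ (q:ℝ)} :=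
  isSL_congr (isSL_le3 j j j (-1) 0 0 q)
    (by ext w; simp only [Set.mem_setOf_eq]; push_cast; constructor <;> intro <;> linarith)

theorem isSL_const_le {m} (j : Fin m) (q : ℚ) : IsSL {w : Fin m → ℝ | (q:ℝ) ≤ w j} :=
  isSL_congr (isSL_le3 j j j 1 0 0 (-q))
    (by ext w; simp only [Set.mem_setOf_eq]; push_cast; constructor <;> intro <;> linarith)

theorem isSL_eq_scal {m} (j k : Fin m) (q : ℚ) :
    IsSL {w : Fin m → ℝ | w j = (q:ℝ) * w k} :=
  isSL_congr (IsSL.inter (isSL_le3 j k k (-1) q 0 0) (isSL_le3 j k k 1 (-q) 0 0))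
    (by ext w; simp only [Set.mem_inter_iff, Set.mem_setOf_eq]; push_cast
        constructor
        · rintro ⟨h1, h2⟩; linarith
        · intro h; constructor <;> linarith)

theorem Icoe_max (a b : I) : ((max a b : I) : ℝ) = max (a : ℝ) (b : ℝ) := by
  rcases le_total a b with h | h
  · rw [max_eq_right h, max_eq_right (Subtype.coe_le_coe.mpr h)]
  · rw [max_eq_left h, max_eq_left (Subtype.coe_le_coe.mpr h)]

theorem Icoe_min (a b : I) : ((min a b : I) : ℝ) = min (a : ℝ) (b : ℝ) := by
  rcases le_total a b with h | h
  · rw [min_eq_left h, min_eq_left (Subtype.coe_le_coe.mpr h)]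
  · rw [min_eq_right h, min_eq_right (Subtype.coe_le_coe.mpr h)]

section binops
variable {n : ℕ}

theorem isSL_egraph_join {t₁ t₂ : LTerm n} (h₁ : IsSL (egraph t₁)) (h₂ : IsSL (egraph t₂)) :
    IsSL (egraph (LTerm.join t₁ t₂)) := by
  have he : ∀ ρ, (LTerm.join t₁ t₂).eval ρ = max (t₁.eval ρ) (t₂.eval ρ) :=
    fun ρ => by simp [LTerm.eval]
  apply isSL_binary _ he h₁ h₂
    (Rp := fun z a b => (a ≤ z ∧ b ≤ z) ∧ (z ≤ a ∨ z ≤ b))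
  · exact isSL_congr
      (IsSL.inter
        (IsSL.inter
          (isSL_le_coord ((Fin.last (n+1)).castSucc) ((Fin.last n).castSucc.castSucc))
          (isSL_le_coord (Fin.last (n+2)) ((Fin.last n).castSucc.castSucc)))
        (IsSL.union
          (isSL_le_coord ((Fin.last n).castSucc.castSucc) ((Fin.last (n+1)).castSucc))
          (isSL_le_coord ((Fin.last n).castSucc.castSucc) (Fin.last (n+2)))))
      (by ext w; simp only [Set.mem_inter_iff, Set.mem_union, Set.mem_setOf_eq])
  · intro a b
    rw [Icoe_max]
    refine ⟨⟨le_max_left _ _, le_max_right _ _⟩, ?_⟩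
    rcases le_total (a:ℝ) b with h | h
    · exact Or.inr (by rw [max_eq_right h])
    · exact Or.inl (by rw [max_eq_left h])
  · rintro a b z ⟨⟨h1, h2⟩, h3 | h3⟩ <;> rw [Icoe_max]
    · exact le_antisymm (by rw [max_eq_left (by linarith : (b:ℝ) ≤ a)]; linarith)
        (max_le h1 h2)
    · exact le_antisymm (by rw [max_eq_right (by linarith : (a:ℝ) ≤ b)]; linarith)
        (max_le h1 h2)

theorem isSL_egraph_meet {t₁ t₂ : LTerm n} (h₁ : IsSL (egraph t₁)) (h₂ : IsSL (egraph t₂)) :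
    IsSL (egraph (LTerm.meet t₁ t₂)) := by
  have he : ∀ ρ, (LTerm.meet t₁ t₂).eval ρ = min (t₁.eval ρ) (t₂.eval ρ) :=
    fun ρ => by simp [LTerm.eval]
  apply isSL_binary _ he h₁ h₂
    (Rp := fun z a b => (z ≤ a ∧ z ≤ b) ∧ (a ≤ z ∨ b ≤ z))
  · exact isSL_congr
      (IsSL.inter
        (IsSL.inter
          (isSL_le_coord ((Fin.last n).castSucc.castSucc) ((Fin.last (n+1)).castSucc))
          (isSL_le_coord ((Fin.last n).castSucc.castSucc) (Fin.last (n+2))))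
        (IsSL.union
          (isSL_le_coord ((Fin.last (n+1)).castSucc) ((Fin.last n).castSucc.castSucc))
          (isSL_le_coord (Fin.last (n+2)) ((Fin.last n).castSucc.castSucc))))
      (by ext w; simp only [Set.mem_inter_iff, Set.mem_union, Set.mem_setOf_eq])
  · intro a b
    rw [Icoe_min]
    refine ⟨⟨min_le_left _ _, min_le_right _ _⟩, ?_⟩
    rcases le_total (a:ℝ) b with h | h
    · exact Or.inl (by rw [min_eq_left h])
    · exact Or.inr (by rw [min_eq_right h])
  · rintro a b z ⟨⟨h1, h2⟩, h3 | h3⟩ <;> rw [Icoe_min]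
    · exact le_antisymm (le_min h1 h2) (by rw [min_eq_left (by linarith : (a:ℝ) ≤ b)]; linarith)
    · exact le_antisymm (le_min h1 h2) (by rw [min_eq_right (by linarith : (b:ℝ) ≤ a)]; linarith)

theorem isSL_egraph_oplus {t₁ t₂ : LTerm n} (h₁ : IsSL (egraph t₁)) (h₂ : IsSL (egraph t₂)) :
    IsSL (egraph (LTerm.oplus t₁ t₂)) := by
  have he : ∀ ρ, (LTerm.oplus t₁ t₂).eval ρ = lukAdd (t₁.eval ρ) (t₂.eval ρ) :=
    fun ρ => by simp [LTerm.eval]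
  apply isSL_binary _ he h₁ h₂
    (Rp := fun z a b => (z ≤ ((1:ℚ):ℝ) ∧ z ≤ a + b + ((0:ℚ):ℝ)) ∧
      (((1:ℚ):ℝ) ≤ z ∨ a + b + ((0:ℚ):ℝ) ≤ z))
  · exact isSL_congr
      (IsSL.inter
        (IsSL.inter
          (isSL_le_const ((Fin.last n).castSucc.castSucc) 1)
          (isSL_le_pairc ((Fin.last n).castSucc.castSucc) ((Fin.last (n+1)).castSucc)
            (Fin.last (n+2)) 0))
        (IsSL.union
          (isSL_const_le ((Fin.last n).castSucc.castSucc) 1)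
          (isSL_pairc_le ((Fin.last n).castSucc.castSucc) ((Fin.last (n+1)).castSucc)
            (Fin.last (n+2)) 0)))
      (by ext w; simp only [Set.mem_inter_iff, Set.mem_union, Set.mem_setOf_eq])
  · intro a b
    push_cast
    show (min 1 ((a:ℝ) + b) ≤ 1 ∧ min 1 ((a:ℝ)+b) ≤ (a:ℝ) + b + 0) ∧ _
    refine ⟨⟨min_le_left _ _, by have := min_le_right (1:ℝ) ((a:ℝ)+b); linarith⟩, ?_⟩
    rcases le_total (1:ℝ) ((a:ℝ) + b) with h | h
    · exact Or.inl (by show (1:ℝ) ≤ min 1 _; rw [min_eq_left h])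
    · exact Or.inr (by show (a:ℝ) + b + 0 ≤ min 1 _; rw [min_eq_right h]; linarith)
  · rintro a b z ⟨⟨h1, h2⟩, h3 | h3⟩ <;> show z = min 1 ((a:ℝ) + b) <;> push_cast at h1 h2 h3
    · exact le_antisymm (le_min h1 (by linarith)) (by rw [min_eq_left (by linarith)]; linarith)
    · exact le_antisymm (le_min h1 (by linarith)) (by rw [min_eq_right (by linarith)]; linarith)

theorem isSL_egraph_odot {t₁ t₂ : LTerm n} (h₁ : IsSL (egraph t₁)) (h₂ : IsSL (egraph t₂)) :
    IsSL (egraph (LTerm.odot t₁ t₂)) := by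
  have he : ∀ ρ, (LTerm.odot t₁ t₂).eval ρ = lukMul (t₁.eval ρ) (t₂.eval ρ) :=
    fun ρ => by simp [LTerm.eval]
  apply isSL_binary _ he h₁ h₂
    (Rp := fun z a b => (((0:ℚ):ℝ) ≤ z ∧ a + b + ((-1:ℚ):ℝ) ≤ z) ∧
      (z ≤ ((0:ℚ):ℝ) ∨ z ≤ a + b + ((-1:ℚ):ℝ)))
  · exact isSL_congr
      (IsSL.inter
        (IsSL.inter
          (isSL_const_le ((Fin.last n).castSucc.castSucc) 0)
          (isSL_pairc_le ((Fin.last n).castSucc.castSucc) ((Fin.last (n+1)).castSucc)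
            (Fin.last (n+2)) (-1)))
        (IsSL.union
          (isSL_le_const ((Fin.last n).castSucc.castSucc) 0)
          (isSL_le_pairc ((Fin.last n).castSucc.castSucc) ((Fin.last (n+1)).castSucc)
            (Fin.last (n+2)) (-1))))
      (by ext w; simp only [Set.mem_inter_iff, Set.mem_union, Set.mem_setOf_eq])
  · intro a b
    push_cast
    show ((0:ℝ) ≤ max 0 ((a:ℝ) + b - 1) ∧ (a:ℝ) + b + (-1) ≤ max 0 ((a:ℝ)+b-1)) ∧ _
    refine ⟨⟨le_max_left _ _, by have := le_max_right (0:ℝ) ((a:ℝ)+b-1); linarith⟩, ?_⟩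
    rcases le_total ((a:ℝ) + b - 1) 0 with h | h
    · exact Or.inl (by show max 0 ((a:ℝ)+b-1) ≤ 0; rw [max_eq_left h])
    · refine Or.inr ?_
      show max 0 ((a:ℝ)+b-1) ≤ (a:ℝ) + b + (-1)
      rw [max_eq_right h]; linarith
  · rintro a b z ⟨⟨h1, h2⟩, h3 | h3⟩ <;> show z = max 0 ((a:ℝ) + b - 1) <;>
      push_cast at h1 h2 h3
    · exact le_antisymm (by rw [max_eq_left (by linarith)]; linarith)
        (max_le h1 (by linarith))
    · exact le_antisymm (by rw [max_eq_right (by linarith)]; linarith)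
        (max_le h1 (by linarith))

end binops
section varscal
variable {n : ℕ}

theorem isSL_egraph_var (i : Fin n) : IsSL (egraph (LTerm.var i)) := by
  refine isSL_congr
    (IsSL.inter (isSL_bndAll (n+1))
      (IsSL.inter (isSL_le_coord (Fin.last n) i.castSucc)
        (isSL_le_coord i.castSucc (Fin.last n)))) ?_
  ext v
  simp only [Set.mem_inter_iff, Set.mem_setOf_eq, egraph]
  constructor
  · rintro ⟨hb, h1, h2⟩
    refine ⟨fun j => ⟨v j.castSucc, (hb j.castSucc).1, (hb j.castSucc).2⟩, fun j => rfl, ?_⟩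
    simp only [LTerm.eval]
    exact le_antisymm h1 h2
  · rintro ⟨ρ, hρ, hz⟩
    have hz' : v (Fin.last n) = (ρ i : ℝ) := by rw [hz]; rfl
    refine ⟨?_, le_of_eq (by rw [hz', hρ i]), le_of_eq (by rw [hz', hρ i])⟩
    intro j
    refine Fin.lastCases ?_ ?_ j
    · rw [hz']; exact ⟨(ρ i).2.1, (ρ i).2.2⟩
    · intro k; rw [hρ k]; exact ⟨(ρ k).2.1, (ρ k).2.2⟩

/-- embedding `Fin (n+1) → Fin (n+2)`: params to params, last to `n+1`. -/
def emb0 (n : ℕ) : Fin (n+1) → Fin (n+2) :=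
  Fin.snoc (fun i : Fin n => i.castSucc.castSucc) (Fin.last (n+1))

theorem isSL_egraph_scal (q : {q : ℚ // 0 ≤ q ∧ q ≤ 1}) {t₁ : LTerm n}
    (h₁ : IsSL (egraph t₁)) : IsSL (egraph (LTerm.scal q t₁)) := by
  have hS : IsSL ({w : Fin (n+2) → ℝ | w ∘ emb0 n ∈ egraph t₁} ∩
      {w | w ((Fin.last n).castSucc) = (q.1:ℝ) * w (Fin.last (n+1))}) :=
    IsSL.inter (IsSL.reindex _ h₁) (isSL_eq_scal _ _ _)
  refine isSL_congr (IsSL.proj hS) ?_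
  ext v
  simp only [Set.mem_setOf_eq, Set.mem_inter_iff]
  constructor
  · rintro ⟨x, ⟨ρ, hρ, hx⟩, hq⟩
    refine ⟨ρ, ?_, ?_⟩
    · intro i
      have := hρ i
      simpa [emb0, Function.comp, Fin.snoc_castSucc, Fin.snoc_last] using this
    · have hx' : x = (t₁.eval ρ : ℝ) := by
        have := hx
        simpa [emb0, Function.comp, Fin.snoc_castSucc, Fin.snoc_last] using this
      have hq' : v (Fin.last n) = (q.1:ℝ) * x := by
        have := hq
        simpa [Fin.snoc_castSucc, Fin.snoc_last] using this
      rw [hq', hx']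
      rfl
  · rintro ⟨ρ, hρ, hz⟩
    refine ⟨(t₁.eval ρ : ℝ), ⟨ρ, ?_, ?_⟩, ?_⟩
    · intro i
      simp only [emb0, Function.comp, Fin.snoc_castSucc]
      simpa using hρ i
    · simp [emb0, Function.comp, Fin.snoc_castSucc, Fin.snoc_last]
    · simp only [Fin.snoc_castSucc, Fin.snoc_last]
      rw [hz]
      rfl

end varscal
section fixpoints
variable {n : ℕ}

/-- `δ : Fin (n+2) → Fin (n+1)`: params to params, the two last coords to `last`. -/
def dmap (n : ℕ) : Fin (n+2) → Fin (n+1) :=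
  Fin.snoc (Fin.snoc (fun i : Fin n => i.castSucc) (Fin.last n)) (Fin.last n)

/-- `τ : Fin (n+1) → Fin (n+2)`: params to params, last to last. -/
def tmap (n : ℕ) : Fin (n+1) → Fin (n+2) :=
  Fin.snoc (fun i : Fin n => i.castSucc.castSucc) (Fin.last (n+1))

theorem isSL_egraph_mu {t : LTerm (n+1)} (h : IsSL (egraph t)) :
    IsSL (egraph (LTerm.mu t)) := by
  classical
  -- LeS : set of (x⃗, y) with x⃗, y ∈ [0,1] and  t.eval (x⃗, y) ≤ y
  set LeS : Set (Fin (n+1) → ℝ) :=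
    {u | ∃ w : ℝ, Fin.snoc u w ∈
      (egraph t ∩ {v : Fin (n+2) → ℝ | v (Fin.last (n+1)) ≤ v ((Fin.last n).castSucc)})}
    with hLeS
  have hLeSSL : IsSL LeS :=
    IsSL.proj (IsSL.inter h (isSL_le_coord _ _))
  -- Bad : set of (x⃗, z, y) with (x⃗,y) ∈ LeS and y < z
  set Bad : Set (Fin (n+2) → ℝ) :=
    {w | w ∘ tmap n ∈ LeS} ∩
      {w : Fin (n+2) → ℝ | w (Fin.last (n+1)) < w ((Fin.last n).castSucc)}
    with hBad
  have hBadSL : IsSL Bad := IsSL.inter (IsSL.reindex _ hLeSSL) (isSL_lt_coord _ _)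
  have hASL : IsSL {v : Fin (n+1) → ℝ | v ∘ dmap n ∈ egraph t} := IsSL.reindex _ h
  refine isSL_congr (IsSL.inter hASL
    (IsSL.compl (IsSL.proj hBadSL))) ?_
  ext v
  simp only [Set.mem_inter_iff, Set.mem_setOf_eq, Set.mem_compl_iff]
  -- membership in LeS at (x⃗, y), unfolded
  have hLeS_mem : ∀ (u : Fin (n+1) → ℝ),
      u ∈ LeS ↔ ∃ ρ' : Fin (n+1) → I, (∀ i, u i = (ρ' i : ℝ)) ∧
        (t.eval ρ' : ℝ) ≤ u (Fin.last n) := by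
    intro u
    rw [hLeS]
    simp only [Set.mem_setOf_eq, Set.mem_inter_iff]
    constructor
    · rintro ⟨w, ⟨ρ', hρ', hw⟩, hle⟩
      refine ⟨ρ', ?_, ?_⟩
      · intro i
        have := hρ' i
        rwa [Fin.snoc_castSucc] at this
      · rw [Fin.snoc_last] at hw
        rw [← hw]
        have := hle
        rwa [Fin.snoc_last, Fin.snoc_castSucc] at this
    · rintro ⟨ρ', hρ', hle⟩
      refine ⟨(t.eval ρ' : ℝ), ⟨ρ', ?_, ?_⟩, ?_⟩
      · intro i; rw [Fin.snoc_castSucc]; exact hρ' i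
      · rw [Fin.snoc_last]
      · rw [Fin.snoc_last, Fin.snoc_castSucc]; exact hle
  constructor
  · -- A ∩ (proj Bad)ᶜ ⊆ egraph (mu t)
    rintro ⟨⟨ρt, hρt, hlast⟩, hnb⟩
    set ρ : Fin n → I := fun j => ρt j.castSucc with hρdef
    set z : I := ρt (Fin.last n) with hzdef
    have hvj : ∀ j : Fin n, v j.castSucc = (ρ j : ℝ) := by
      intro j
      have := hρt j.castSucc
      simpa [dmap, Function.comp, Fin.snoc_castSucc] using this
    have hvz : v (Fin.last n) = (z : ℝ) := by
      have := hρt (Fin.last n)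
      simpa [dmap, Function.comp, Fin.snoc_castSucc, Fin.snoc_last] using this
    have hρteq : ρt = Fin.snoc ρ z := by
      funext i
      refine Fin.lastCases ?_ ?_ i
      · rw [Fin.snoc_last]
      · intro j
        rw [Fin.snoc_castSucc]
    set f : I → I := fun x => t.eval (Fin.snoc ρ x) with hf
    have hfm : Monotone f := fun x x' hx => eval_mono t (snoc_le_snoc (le_refl ρ) hx)
    have hfix : f z = z := by
      apply Subtype.ext
      have h1 : (v ∘ dmap n) (Fin.last (n+1)) = (t.eval ρt : ℝ) := hlast
      have h2 : (v ∘ dmap n) (Fin.last (n+1)) = v (Fin.last n) := by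
        simp [dmap, Function.comp, Fin.snoc_last]
      rw [h2, hvz] at h1
      rw [hf]
      simp only
      rw [← hρteq]
      exact h1.symm
    have hleast : ∀ y, f y ≤ y → z ≤ y := by
      intro y hy
      by_contra hcon
      push_neg at hcon
      apply hnb
      refine ⟨(y : ℝ), ?_, ?_⟩
      · rw [Set.mem_setOf_eq, hLeS_mem]
        refine ⟨Fin.snoc ρ y, ?_, ?_⟩
        · intro i
          refine Fin.lastCases ?_ ?_ i
          · simp [tmap, Function.comp, Fin.snoc_castSucc, Fin.snoc_last]
          · intro j
            simp only [tmap, Function.comp, Fin.snoc_castSucc]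
            exact hvj j
        · have hval : (Fin.snoc v (y:ℝ) ∘ tmap n) (Fin.last n) = (y : ℝ) := by
            simp [tmap, Function.comp, Fin.snoc_castSucc, Fin.snoc_last]
          rw [hval]
          exact Subtype.coe_le_coe.mpr hy
      · rw [Set.mem_setOf_eq]
        simp only [Fin.snoc_castSucc, Fin.snoc_last]
        rw [hvz]
        exact Subtype.coe_lt_coe.mpr hcon
    have := mu_unique f hfm z hfix hleast
    exact ⟨ρ, hvj, by rw [hvz, this]; rfl⟩

  · -- egraph (mu t) ⊆ A ∩ (proj Bad)ᶜ
    rintro ⟨ρ, hρ, hz⟩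
    set f : I → I := fun x => t.eval (Fin.snoc ρ x) with hf
    have hfm : Monotone f := fun x x' hx => eval_mono t (snoc_le_snoc (le_refl ρ) hx)
    obtain ⟨hfix, hleast⟩ := kt_mu f hfm
    have hev : (LTerm.mu t).eval ρ = sInf {x | f x ≤ x} := rfl
    set z : I := (LTerm.mu t).eval ρ with hzdef
    have hvz : v (Fin.last n) = (z : ℝ) := hz
    constructor
    · -- A part
      refine ⟨Fin.snoc ρ z, ?_, ?_⟩
      · intro i
        refine Fin.lastCases ?_ ?_ i
        · simp only [Function.comp, dmap, Fin.snoc_castSucc, Fin.snoc_last]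
          rw [hvz]
        · intro j
          simp only [Function.comp, dmap, Fin.snoc_castSucc]
          exact hρ j
      · simp only [Function.comp, dmap, Fin.snoc_last]
        rw [hvz]
        have : t.eval (Fin.snoc ρ z) = z := by
          rw [hev]; exact hfix
        rw [this]
    · -- no bad witness
      rintro ⟨x, hx⟩
      rw [hBad] at hx
      obtain ⟨hm, hlt⟩ := hx
      rw [Set.mem_setOf_eq] at hlt
      have hlt' : x < v (Fin.last n) := by
        simpa [Fin.snoc_castSucc, Fin.snoc_last] using hlt
      rw [Set.mem_setOf_eq, hLeS_mem] at hm
      obtain ⟨ρ', hρ', hle⟩ := hm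
      -- identify ρ'
      have hcomp : ∀ i : Fin (n+1), (Fin.snoc v x ∘ tmap n) i = (ρ' i : ℝ) := hρ'
      have hx_eq : x = (ρ' (Fin.last n) : ℝ) := by
        have := hcomp (Fin.last n)
        simpa [tmap, Function.comp, Fin.snoc_castSucc, Fin.snoc_last] using this
      have hpar : ∀ j : Fin n, (ρ j : ℝ) = (ρ' j.castSucc : ℝ) := by
        intro j
        have := hcomp j.castSucc
        simp only [tmap, Function.comp, Fin.snoc_castSucc] at this
        rw [← this]; exact (hρ j).symm
      have hρ'eq : ρ' = Fin.snoc ρ (ρ' (Fin.last n)) := by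
        funext i
        refine Fin.lastCases ?_ ?_ i
        · rw [Fin.snoc_last]
        · intro j
          rw [Fin.snoc_castSucc]
          exact Subtype.ext (hpar j).symm
      have hval : (Fin.snoc v x ∘ tmap n) (Fin.last n) = x := by
        simp [tmap, Function.comp, Fin.snoc_castSucc, Fin.snoc_last]
      rw [hval] at hle
      -- f y ≤ y for y = ρ' (last n)
      have hff : f (ρ' (Fin.last n)) ≤ ρ' (Fin.last n) := by
        rw [← Subtype.coe_le_coe]
        rw [hf]
        simp only
        rw [← hρ'eq, ← hx_eq]
        exact hle
      have := hleast _ hff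
      rw [← hev] at this
      have : (z : ℝ) ≤ x := le_trans (Subtype.coe_le_coe.mpr this) (le_of_eq hx_eq.symm)
      rw [hvz] at hlt'
      linarith
end fixpoints
section fixpointsnu
variable {n : ℕ}

theorem isSL_egraph_nu {t : LTerm (n+1)} (h : IsSL (egraph t)) :
    IsSL (egraph (LTerm.nu t)) := by
  classical
  -- LeS : set of (x⃗, y) with x⃗, y ∈ [0,1] and  t.eval (x⃗, y) ≤ y
  set LeS : Set (Fin (n+1) → ℝ) :=
    {u | ∃ w : ℝ, Fin.snoc u w ∈
      (egraph t ∩ {v : Fin (n+2) → ℝ | v ((Fin.last n).castSucc) ≤ v (Fin.last (n+1))})}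
    with hLeS
  have hLeSSL : IsSL LeS :=
    IsSL.proj (IsSL.inter h (isSL_le_coord _ _))
  -- Bad : set of (x⃗, z, y) with (x⃗,y) ∈ LeS and y < z
  set Bad : Set (Fin (n+2) → ℝ) :=
    {w | w ∘ tmap n ∈ LeS} ∩
      {w : Fin (n+2) → ℝ | w ((Fin.last n).castSucc) < w (Fin.last (n+1))}
    with hBad
  have hBadSL : IsSL Bad := IsSL.inter (IsSL.reindex _ hLeSSL) (isSL_lt_coord _ _)
  have hASL : IsSL {v : Fin (n+1) → ℝ | v ∘ dmap n ∈ egraph t} := IsSL.reindex _ h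
  refine isSL_congr (IsSL.inter hASL
    (IsSL.compl (IsSL.proj hBadSL))) ?_
  ext v
  simp only [Set.mem_inter_iff, Set.mem_setOf_eq, Set.mem_compl_iff]
  -- membership in LeS at (x⃗, y), unfolded
  have hLeS_mem : ∀ (u : Fin (n+1) → ℝ),
      u ∈ LeS ↔ ∃ ρ' : Fin (n+1) → I, (∀ i, u i = (ρ' i : ℝ)) ∧
        u (Fin.last n) ≤ (t.eval ρ' : ℝ) := by
    intro u
    rw [hLeS]
    simp only [Set.mem_setOf_eq, Set.mem_inter_iff]
    constructor
    · rintro ⟨w, ⟨ρ', hρ', hw⟩, hle⟩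
      refine ⟨ρ', ?_, ?_⟩
      · intro i
        have := hρ' i
        rwa [Fin.snoc_castSucc] at this
      · rw [Fin.snoc_last] at hw
        rw [← hw]
        have := hle
        rwa [Fin.snoc_last, Fin.snoc_castSucc] at this
    · rintro ⟨ρ', hρ', hle⟩
      refine ⟨(t.eval ρ' : ℝ), ⟨ρ', ?_, ?_⟩, ?_⟩
      · intro i; rw [Fin.snoc_castSucc]; exact hρ' i
      · rw [Fin.snoc_last]
      · rw [Fin.snoc_last, Fin.snoc_castSucc]; exact hle
  constructor
  · -- A ∩ (proj Bad)ᶜ ⊆ egraph (mu t)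
    rintro ⟨⟨ρt, hρt, hlast⟩, hnb⟩
    set ρ : Fin n → I := fun j => ρt j.castSucc with hρdef
    set z : I := ρt (Fin.last n) with hzdef
    have hvj : ∀ j : Fin n, v j.castSucc = (ρ j : ℝ) := by
      intro j
      have := hρt j.castSucc
      simpa [dmap, Function.comp, Fin.snoc_castSucc] using this
    have hvz : v (Fin.last n) = (z : ℝ) := by
      have := hρt (Fin.last n)
      simpa [dmap, Function.comp, Fin.snoc_castSucc, Fin.snoc_last] using this
    have hρteq : ρt = Fin.snoc ρ z := by
      funext i
      refine Fin.lastCases ?_ ?_ i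
      · rw [Fin.snoc_last]
      · intro j
        rw [Fin.snoc_castSucc]
    set f : I → I := fun x => t.eval (Fin.snoc ρ x) with hf
    have hfm : Monotone f := fun x x' hx => eval_mono t (snoc_le_snoc (le_refl ρ) hx)
    have hfix : f z = z := by
      apply Subtype.ext
      have h1 : (v ∘ dmap n) (Fin.last (n+1)) = (t.eval ρt : ℝ) := hlast
      have h2 : (v ∘ dmap n) (Fin.last (n+1)) = v (Fin.last n) := by
        simp [dmap, Function.comp, Fin.snoc_last]
      rw [h2, hvz] at h1
      rw [hf]
      simp only
      rw [← hρteq]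
      exact h1.symm
    have hleast : ∀ y, y ≤ f y → y ≤ z := by
      intro y hy
      by_contra hcon
      push_neg at hcon
      apply hnb
      refine ⟨(y : ℝ), ?_, ?_⟩
      · rw [Set.mem_setOf_eq, hLeS_mem]
        refine ⟨Fin.snoc ρ y, ?_, ?_⟩
        · intro i
          refine Fin.lastCases ?_ ?_ i
          · simp [tmap, Function.comp, Fin.snoc_castSucc, Fin.snoc_last]
          · intro j
            simp only [tmap, Function.comp, Fin.snoc_castSucc]
            exact hvj j
        · have hval : (Fin.snoc v (y:ℝ) ∘ tmap n) (Fin.last n) = (y : ℝ) := by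
            simp [tmap, Function.comp, Fin.snoc_castSucc, Fin.snoc_last]
          rw [hval]
          exact Subtype.coe_le_coe.mpr hy
      · rw [Set.mem_setOf_eq]
        simp only [Fin.snoc_castSucc, Fin.snoc_last]
        rw [hvz]
        exact Subtype.coe_lt_coe.mpr hcon
    have := nu_unique f hfm z hfix hleast
    exact ⟨ρ, hvj, by rw [hvz, this]; rfl⟩

  · -- egraph (mu t) ⊆ A ∩ (proj Bad)ᶜ
    rintro ⟨ρ, hρ, hz⟩
    set f : I → I := fun x => t.eval (Fin.snoc ρ x) with hf
    have hfm : Monotone f := fun x x' hx => eval_mono t (snoc_le_snoc (le_refl ρ) hx)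
    obtain ⟨hfix, hleast⟩ := kt_nu f hfm
    have hev : (LTerm.nu t).eval ρ = sSup {x | x ≤ f x} := rfl
    set z : I := (LTerm.nu t).eval ρ with hzdef
    have hvz : v (Fin.last n) = (z : ℝ) := hz
    constructor
    · -- A part
      refine ⟨Fin.snoc ρ z, ?_, ?_⟩
      · intro i
        refine Fin.lastCases ?_ ?_ i
        · simp only [Function.comp, dmap, Fin.snoc_castSucc, Fin.snoc_last]
          rw [hvz]
        · intro j
          simp only [Function.comp, dmap, Fin.snoc_castSucc]
          exact hρ j
      · simp only [Function.comp, dmap, Fin.snoc_last]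
        rw [hvz]
        have : t.eval (Fin.snoc ρ z) = z := by
          rw [hev]; exact hfix
        rw [this]
    · -- no bad witness
      rintro ⟨x, hx⟩
      rw [hBad] at hx
      obtain ⟨hm, hlt⟩ := hx
      rw [Set.mem_setOf_eq] at hlt
      have hlt' : v (Fin.last n) < x := by
        simpa [Fin.snoc_castSucc, Fin.snoc_last] using hlt
      rw [Set.mem_setOf_eq, hLeS_mem] at hm
      obtain ⟨ρ', hρ', hle⟩ := hm
      -- identify ρ'
      have hcomp : ∀ i : Fin (n+1), (Fin.snoc v x ∘ tmap n) i = (ρ' i : ℝ) := hρ'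
      have hx_eq : x = (ρ' (Fin.last n) : ℝ) := by
        have := hcomp (Fin.last n)
        simpa [tmap, Function.comp, Fin.snoc_castSucc, Fin.snoc_last] using this
      have hpar : ∀ j : Fin n, (ρ j : ℝ) = (ρ' j.castSucc : ℝ) := by
        intro j
        have := hcomp j.castSucc
        simp only [tmap, Function.comp, Fin.snoc_castSucc] at this
        rw [← this]; exact (hρ j).symm
      have hρ'eq : ρ' = Fin.snoc ρ (ρ' (Fin.last n)) := by
        funext i
        refine Fin.lastCases ?_ ?_ i
        · rw [Fin.snoc_last]
        · intro j
          rw [Fin.snoc_castSucc]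
          exact Subtype.ext (hpar j).symm
      have hval : (Fin.snoc v x ∘ tmap n) (Fin.last n) = x := by
        simp [tmap, Function.comp, Fin.snoc_castSucc, Fin.snoc_last]
      rw [hval] at hle
      -- f y ≤ y for y = ρ' (last n)
      have hff : ρ' (Fin.last n) ≤ f (ρ' (Fin.last n)) := by
        rw [← Subtype.coe_le_coe]
        rw [hf]
        simp only
        rw [← hρ'eq, ← hx_eq]
        exact hle
      have := hleast _ hff
      rw [← hev] at this
      have : x ≤ (z : ℝ) := le_trans (le_of_eq hx_eq) (Subtype.coe_le_coe.mpr this)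
      rw [hvz] at hlt'
      linarith

end fixpointsnu
theorem isSL_egraph : ∀ {n} (t : LTerm n), IsSL (egraph t) := by
  intro n t
  induction t with
  | var i => exact isSL_egraph_var i
  | scal q t ih => exact isSL_egraph_scal q ih
  | join t₁ t₂ ih₁ ih₂ => exact isSL_egraph_join ih₁ ih₂
  | meet t₁ t₂ ih₁ ih₂ => exact isSL_egraph_meet ih₁ ih₂
  | oplus t₁ t₂ ih₁ ih₂ => exact isSL_egraph_oplus ih₁ ih₂
  | odot t₁ t₂ ih₁ ih₂ => exact isSL_egraph_odot ih₁ ih₂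
  | mu t ih => exact isSL_egraph_mu ih
  | nu t ih => exact isSL_egraph_nu ih

theorem isSL_substLast {m} {s : Set (Fin (m+1) → ℝ)} (hs : IsSL s) (q : ℚ) :
    IsSL {v : Fin m → ℝ | Fin.snoc v (q:ℝ) ∈ s} := by
  have h1 : IsSL (s ∩ ({w : Fin (m+1) → ℝ | w (Fin.last m) ≤ (q:ℝ)} ∩
      {w : Fin (m+1) → ℝ | (q:ℝ) ≤ w (Fin.last m)})) :=
    IsSL.inter hs (IsSL.inter (isSL_le_const _ q) (isSL_const_le _ q))
  refine isSL_congr (IsSL.proj h1) ?_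
  ext v
  simp only [Set.mem_setOf_eq, Set.mem_inter_iff]
  constructor
  · rintro ⟨x, hx, h2, h3⟩
    rw [Fin.snoc_last] at h2 h3
    have : x = (q:ℝ) := le_antisymm h2 h3
    rwa [this] at hx
  · intro hx
    exact ⟨(q:ℝ), hx, by rw [Fin.snoc_last], by rw [Fin.snoc_last]⟩

theorem isSL_slice : ∀ (m : ℕ) (s : Set (Fin (m+1) → ℝ)), IsSL s →
    ∀ (r : Fin m → ℝ), (∀ i, ∃ q : ℚ, r i = (q:ℝ)) →
    IsSL {v : Fin 1 → ℝ | Fin.cons (v 0) r ∈ s} := by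
  intro m
  induction m with
  | zero =>
    intro s hs r _
    refine isSL_congr hs ?_
    ext v
    simp only [Set.mem_setOf_eq]
    have : Fin.cons (v 0) r = v := by
      funext i
      refine Fin.cases ?_ ?_ i
      · rw [Fin.cons_zero]
      · intro j; exact j.elim0
    rw [this]
  | succ m ih =>
    intro s hs r hr
    obtain ⟨q, hq⟩ := hr (Fin.last m)
    have h1 : IsSL {v : Fin (m+1) → ℝ | Fin.snoc v (q:ℝ) ∈ s} := isSL_substLast hs q
    have h2 := ih _ h1 (Fin.init r) (fun i => hr i.castSucc)
    refine isSL_congr h2 ?_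
    ext v
    simp only [Set.mem_setOf_eq]
    have : Fin.snoc (Fin.cons (v 0) (Fin.init r)) (q:ℝ)
        = (Fin.cons (v 0) r : Fin (m+2) → ℝ) := by
      conv_rhs => rw [← Fin.snoc_init_self r]
      rw [Fin.cons_snoc_eq_snoc_cons, hq]
    rw [this]

theorem atom1_lhs (A : SL.Atom 1) (r : ℝ) :
    A.lhs (fun _ => r) = (A.a 0 : ℝ) * r + (A.c : ℝ) := by
  rw [SL.Atom.lhs, Fin.sum_univ_one]

theorem atom_ball (A : SL.Atom 1) (r : ℝ) (hp : 0 < A.lhs (fun _ => r)) :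
    ∃ ε : ℝ, 0 < ε ∧ ∀ r' : ℝ, |r' - r| < ε → 0 < A.lhs (fun _ => r') := by
  refine ⟨A.lhs (fun _ => r) / (|(A.a 0 : ℝ)| + 1), div_pos hp (by positivity), ?_⟩
  intro r' hr'
  rw [atom1_lhs] at hp ⊢
  have habs : |(A.a 0 : ℝ) * r' - (A.a 0 : ℝ) * r| ≤ |(A.a 0 : ℝ)| * |r' - r| := by
    rw [← mul_sub, abs_mul]
  have h3 : |(A.a 0 : ℝ)| * |r' - r| < (|(A.a 0 : ℝ)| + 1) * (A.lhs (fun _ => r) / (|(A.a 0 : ℝ)| + 1)) := by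
    apply mul_lt_mul' (by linarith) hr' (abs_nonneg _) (by positivity)
  have h4 : (|(A.a 0 : ℝ)| + 1) * (A.lhs (fun _ => r) / (|(A.a 0 : ℝ)| + 1))
      = (A.a 0 : ℝ) * r + (A.c : ℝ) := by
    rw [atom1_lhs]
    field_simp
  rw [h4] at h3
  have h5 := lt_of_le_of_lt habs h3
  have := abs_lt.mp h5
  linarith [this.1]

theorem conj_ball (C : List (SL.Atom 1)) (r : ℝ)
    (h : ∀ A ∈ C, 0 < A.lhs (fun _ => r) ∨ A.a 0 = 0) :
    ∃ ε : ℝ, 0 < ε ∧ ∀ r' : ℝ, |r' - r| < ε → ∀ A ∈ C,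
      (0 < A.lhs (fun _ => r') ∨ A.a 0 = 0) := by
  induction C with
  | nil => exact ⟨1, one_pos, fun r' _ A hA => absurd hA List.not_mem_nil⟩
  | cons A C ihC =>
    obtain ⟨ε₁, hε₁, hb⟩ := ihC (fun B hB => h B (List.mem_cons_of_mem _ hB))
    rcases h A List.mem_cons_self with hp | hz
    · obtain ⟨ε₂, hε₂, hA⟩ := atom_ball A r hp
      refine ⟨min ε₁ ε₂, lt_min hε₁ hε₂, ?_⟩
      intro r' hr' B hB
      rcases List.mem_cons.mp hB with rfl | hB
      · exact Or.inl (hA r' (lt_of_lt_of_le hr' (min_le_right _ _)))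
      · exact hb r' (lt_of_lt_of_le hr' (min_le_left _ _)) B hB
    · refine ⟨ε₁, hε₁, ?_⟩
      intro r' hr' B hB
      rcases List.mem_cons.mp hB with rfl | hB
      · exact Or.inr hz
      · exact hb r' hr' B hB

theorem singleton_rat {S : Set (Fin 1 → ℝ)} (hS : IsSL S) (r : ℝ)
    (hsing : S = {fun _ => r}) : ∃ q : ℚ, r = (q:ℝ) := by
  obtain ⟨φ, hφ⟩ := hS
  have hrS : (fun _ : Fin 1 => r) ∈ S := by rw [hsing]; rfl
  obtain ⟨C, hC, hCall⟩ := (hφ _).mp hrS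
  by_cases hcase : ∀ A ∈ C, 0 < A.lhs (fun _ => r) ∨ A.a 0 = 0
  · exfalso
    obtain ⟨ε, hε, hb⟩ := conj_ball C r hcase
    have hmem : (fun _ : Fin 1 => r + ε/2) ∈ S := by
      rw [hφ]
      refine ⟨C, hC, ?_⟩
      intro A hA
      have h1 := hb (r + ε/2) (by rw [show r + ε/2 - r = ε/2 by ring, abs_of_pos (by linarith)]; linarith) A hA
      rcases h1 with h1 | h1
      · rw [SL.Atom.Holds]
        split <;> linarith
      · have hsame : A.lhs (fun _ => r + ε/2) = A.lhs (fun _ => r) := by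
          rw [atom1_lhs, atom1_lhs, h1]
          push_cast
          ring
        have := hCall A hA
        rw [SL.Atom.Holds] at this ⊢
        rw [hsame]
        exact this
    rw [hsing] at hmem
    have : r + ε/2 = r := congrFun hmem 0
    linarith
  · push_neg at hcase
    obtain ⟨A, hA, hns, hz⟩ := hcase
    have hh := hCall A hA
    rw [SL.Atom.Holds] at hh
    have h0le : (0:ℝ) ≤ A.lhs (fun _ => r) := by
      revert hh; split <;> intro hh <;> linarith
    have hlhs : A.lhs (fun _ => r) = 0 := le_antisymm hns h0le
    refine ⟨-A.c / A.a 0, ?_⟩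
    rw [atom1_lhs] at hlhs
    have ha : (A.a 0 : ℝ) ≠ 0 := by exact_mod_cast hz
    push_cast
    field_simp
    linarith

/-- For every Łukasiewicz μ-term `t(x₁, …, xₙ)` and every vector of rationals
in `[0,1]`, the value `t(q₁, …, qₙ)` is a rational number. -/
theorem stmt11 {n : ℕ} (t : LTerm n) (ρ : Fin n → I)
    (hρ : ∀ i, ∃ q : ℚ, ((ρ i : I) : ℝ) = (q : ℝ)) :
    ∃ q : ℚ, ((t.eval ρ : I) : ℝ) = (q : ℝ) := by
  classical
  set sg : Fin (n+1) → Fin (n+1) := Fin.snoc Fin.succ 0 with hsg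
  have hs' : IsSL {u : Fin (n+1) → ℝ | u ∘ sg ∈ egraph t} :=
    IsSL.reindex sg (isSL_egraph t)
  set r : Fin n → ℝ := fun i => ((ρ i : I) : ℝ) with hrdef
  have hS : IsSL {v : Fin 1 → ℝ | Fin.cons (v 0) r ∈ {u : Fin (n+1) → ℝ | u ∘ sg ∈ egraph t}} :=
    isSL_slice n _ hs' r hρ
  have hkey : ∀ v : Fin 1 → ℝ,
      (Fin.cons (v 0) r ∘ sg ∈ egraph t) ↔ v 0 = ((t.eval ρ : I) : ℝ) := by
    intro v
    have hw1 : ∀ i : Fin n, (Fin.cons (v 0) r ∘ sg) i.castSucc = r i := by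
      intro i
      simp only [Function.comp, hsg, Fin.snoc_castSucc, Fin.cons_succ]
    have hw2 : (Fin.cons (v 0) r ∘ sg) (Fin.last n) = v 0 := by
      simp only [Function.comp, hsg, Fin.snoc_last, Fin.cons_zero]
    constructor
    · rintro ⟨ρ', hρ', hval⟩
      have : ρ' = ρ := by
        funext i
        apply Subtype.ext
        have := hρ' i
        rw [hw1 i] at this
        exact this.symm
      rw [hw2] at hval
      rw [hval, this]
    · intro hv
      refine ⟨ρ, ?_, ?_⟩
      · intro i; rw [hw1 i]
      · rw [hw2, hv]
  have hsing : {v : Fin 1 → ℝ | Fin.cons (v 0) r ∈ {u : Fin (n+1) → ℝ | u ∘ sg ∈ egraph t}}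
      = {fun _ => ((t.eval ρ : I) : ℝ)} := by
    ext v
    simp only [Set.mem_setOf_eq, Set.mem_singleton_iff]
    rw [hkey v]
    constructor
    · intro h
      funext i
      have : i = 0 := Fin.ext (by omega)
      rw [this, h]
    · intro h
      rw [h]
  exact singleton_rat hS _ hsing

end
end

section
/- For every Łukasiewicz μ-term t(x₁, …, xₙ), the function r⃗ ↦ t(r⃗) : [0,1]ⁿ → [0,1] is representable by a system of conditioned linear expressions with rational coefficients: there exists a finite family of pairs (Cᵢ, eᵢ), where each eᵢ is a rational affine map q₁x₁ + … + qₙxₙ + q and each Cᵢ is a finite set of strict and non-strict inequalities between rational affine maps in x₁, …, xₙ, such that (1) for every r⃗ ∈ [0,1]ⁿ there is an i such that all inequalities of Cᵢ hold at r⃗, and (2) for every r⃗ ∈ [0,1]ⁿ and every i, if all inequalities of Cᵢ hold at r⃗ then eᵢ(r⃗) = t(r⃗). -/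
open unitInterval

noncomputable section

/-- A rational affine map `q₁x₁ + … + qₙxₙ + q` in `n` variables. -/
def Affine (n : ℕ) : Type := (Fin n → ℚ) × ℚ

/-- Evaluation of a rational affine map at a real vector. -/
def Affine.evalAff {n : ℕ} (e : Affine n) (r : Fin n → ℝ) : ℝ :=
  (∑ i, (e.1 i : ℝ) * r i) + (e.2 : ℝ)

/-- A (strict or non-strict) inequality between two rational affine maps:
`(a, b, true)` means `a < b` and `(a, b, false)` means `a ≤ b`. -/
def AffIneq (n : ℕ) : Type := Affine n × Affine n × Bool

/-- The inequality `c` holds at the real vector `r`. -/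
def AffIneq.holds {n : ℕ} (c : AffIneq n) (r : Fin n → ℝ) : Prop :=
  if c.2.2 then c.1.evalAff r < c.2.1.evalAff r else c.1.evalAff r ≤ c.2.1.evalAff r

open Classical in
instance {n : ℕ} : DecidableEq (AffIneq n) := fun _ _ => Classical.propDecidable _

namespace Luk

variable {n : ℕ}

/-- coerce an `I`-valued vector to reals -/
def co {n : ℕ} (ρ : Fin n → I) : Fin n → ℝ := fun j => ((ρ j : I) : ℝ)

/-- conjunction of a finite set of inequalities -/
def CondHolds (S : Finset (AffIneq n)) (r : Fin n → ℝ) : Prop := ∀ c ∈ S, c.holds r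

/-- disjunctive list satisfaction -/
def DSat (Ls : List (Finset (AffIneq n))) (r : Fin n → ℝ) : Prop :=
  ∃ S ∈ Ls, CondHolds S r

def andRep (L₁ L₂ : List (Finset (AffIneq n))) : List (Finset (AffIneq n)) :=
  L₁.flatMap (fun A => L₂.map (fun B => A ∪ B))

lemma dsat_andRep {L₁ L₂ : List (Finset (AffIneq n))} {r : Fin n → ℝ} :
    DSat (andRep L₁ L₂) r ↔ DSat L₁ r ∧ DSat L₂ r := by
  constructor
  · rintro ⟨S, hS, h⟩
    simp only [andRep, List.mem_flatMap, List.mem_map] at hS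
    obtain ⟨A, hA, B, hB, rfl⟩ := hS
    exact ⟨⟨A, hA, fun c hc => h c (Finset.mem_union_left _ hc)⟩,
      ⟨B, hB, fun c hc => h c (Finset.mem_union_right _ hc)⟩⟩
  · rintro ⟨⟨A, hA, hA'⟩, ⟨B, hB, hB'⟩⟩
    refine ⟨A ∪ B, ?_, fun c hc => ?_⟩
    · simp only [andRep, List.mem_flatMap, List.mem_map]; exact ⟨A, hA, B, hB, rfl⟩
    · rcases Finset.mem_union.1 hc with h | h
      · exact hA' c h
      · exact hB' c h

lemma dsat_append {L₁ L₂ : List (Finset (AffIneq n))} {r : Fin n → ℝ} :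
    DSat (L₁ ++ L₂) r ↔ DSat L₁ r ∨ DSat L₂ r := by
  constructor
  · rintro ⟨S, hS, h⟩
    rcases List.mem_append.1 hS with h' | h'
    · exact Or.inl ⟨S, h', h⟩
    · exact Or.inr ⟨S, h', h⟩
  · rintro (⟨S, hS, h⟩ | ⟨S, hS, h⟩)
    · exact ⟨S, List.mem_append.2 (Or.inl hS), h⟩
    · exact ⟨S, List.mem_append.2 (Or.inr hS), h⟩

def negIneq (c : AffIneq n) : AffIneq n := (c.2.1, c.1, !c.2.2)

lemma negIneq_holds {c : AffIneq n} {r : Fin n → ℝ} :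
    (negIneq c).holds r ↔ ¬ c.holds r := by
  obtain ⟨a, b, s⟩ := c
  cases s <;> simp [negIneq, AffIneq.holds, not_le, not_lt]

def notRep : List (Finset (AffIneq n)) → List (Finset (AffIneq n))
  | [] => [∅]
  | S :: L => andRep (S.toList.map (fun c => {negIneq c})) (notRep L)

lemma dsat_notRep {L : List (Finset (AffIneq n))} {r : Fin n → ℝ} :
    DSat (notRep L) r ↔ ¬ DSat L r := by
  induction L with
  | nil => simp [notRep, DSat, CondHolds]
  | cons S L ih =>
    rw [notRep, dsat_andRep, ih]
    have h1 : DSat (S.toList.map (fun c => ({negIneq c} : Finset (AffIneq n)))) r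
        ↔ ¬ CondHolds S r := by
      constructor
      · rintro ⟨T, hT, h⟩ hS
        simp only [List.mem_map, Finset.mem_toList] at hT
        obtain ⟨c, hc, rfl⟩ := hT
        exact (negIneq_holds.1 (h _ (Finset.mem_singleton_self _))) (hS c hc)
      · intro hS
        rw [CondHolds, not_forall] at hS
        obtain ⟨c, hc⟩ := hS
        rw [_root_.not_imp] at hc
        refine ⟨{negIneq c}, ?_, ?_⟩
        · simp only [List.mem_map, Finset.mem_toList]; exact ⟨c, hc.1, rfl⟩
        · intro d hd; rw [Finset.mem_singleton] at hd; subst hd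
          exact negIneq_holds.2 hc.2
    rw [h1]
    constructor
    · rintro ⟨h1', h2⟩ ⟨T, hT, h⟩
      rcases List.mem_cons.1 hT with rfl | hT
      · exact h1' h
      · exact h2 ⟨T, hT, h⟩
    · intro h
      refine ⟨fun hS => h ⟨S, List.mem_cons_self, hS⟩,
        fun ⟨T, hT, hT'⟩ => h ⟨T, List.mem_cons_of_mem _ hT, hT'⟩⟩

end Luk

namespace Luk
variable {n : ℕ}

def aadd (e₁ e₂ : Affine n) : Affine n := (fun j => e₁.1 j + e₂.1 j, e₁.2 + e₂.2)
def asub (e₁ e₂ : Affine n) : Affine n := (fun j => e₁.1 j - e₂.1 j, e₁.2 - e₂.2)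
def asmul (q : ℚ) (e : Affine n) : Affine n := (fun j => q * e.1 j, q * e.2)
def acst (n : ℕ) (q : ℚ) : Affine n := (fun _ => 0, q)

lemma evalAff_add' (e₁ e₂ : Affine n) (r : Fin n → ℝ) :
    (aadd e₁ e₂).evalAff r = e₁.evalAff r + e₂.evalAff r := by
  simp only [Affine.evalAff, aadd]
  push_cast
  rw [Finset.sum_congr rfl (fun i _ => add_mul _ _ _), Finset.sum_add_distrib]
  ring

lemma evalAff_sub' (e₁ e₂ : Affine n) (r : Fin n → ℝ) :
    (asub e₁ e₂).evalAff r = e₁.evalAff r - e₂.evalAff r := by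
  simp only [Affine.evalAff, asub]
  push_cast
  rw [Finset.sum_congr rfl (fun i _ => sub_mul _ _ _), Finset.sum_sub_distrib]
  ring

lemma evalAff_smulQ (q : ℚ) (e : Affine n) (r : Fin n → ℝ) :
    (asmul q e).evalAff r = (q : ℝ) * e.evalAff r := by
  simp only [Affine.evalAff, asmul]
  push_cast
  rw [mul_add, Finset.mul_sum]
  congr 1
  exact Finset.sum_congr rfl fun i _ => (mul_assoc _ _ _)

lemma evalAff_cst (q : ℚ) (r : Fin n → ℝ) : (acst n q).evalAff r = (q : ℝ) := by
  simp [Affine.evalAff, acst]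

/-- nonstrict inequality e₁ ≤ e₂ -/
def leIneq (e₁ e₂ : Affine n) : AffIneq n := (e₁, e₂, false)

lemma leIneq_holds {e₁ e₂ : Affine n} {r : Fin n → ℝ} :
    (leIneq e₁ e₂).holds r ↔ e₁.evalAff r ≤ e₂.evalAff r := by
  simp [leIneq, AffIneq.holds]

/-- representation data for a real-valued function on the cube -/
abbrev Rep (n : ℕ) := List (Finset (AffIneq n) × Affine n)

def FRepr (F : (Fin n → I) → ℝ) : Prop :=
  ∃ L : Rep n,
    (∀ ρ : Fin n → I, ∃ p ∈ L, CondHolds p.1 (co ρ)) ∧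
    (∀ ρ : Fin n → I, ∀ p ∈ L, CondHolds p.1 (co ρ) → p.2.evalAff (co ρ) = F ρ)

lemma frepr_var (i : Fin n) : FRepr (fun ρ => ((ρ i : I) : ℝ)) := by
  refine ⟨[(∅, (Pi.single i 1, 0))], fun ρ => ⟨_, List.mem_singleton_self _, by simp [CondHolds]⟩,
    fun ρ p hp _ => ?_⟩
  rw [List.mem_singleton] at hp; subst hp
  simp only [Affine.evalAff]
  rw [Finset.sum_eq_single i]
  · simp [co]
  · intro b _ hb; simp [Pi.single_eq_of_ne hb]
  · simp

lemma frepr_cst (q : ℚ) : FRepr (fun _ : Fin n → I => (q : ℝ)) := by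
  refine ⟨[(∅, acst n q)], fun ρ => ⟨_, List.mem_singleton_self _, by simp [CondHolds]⟩,
    fun ρ p hp _ => ?_⟩
  rw [List.mem_singleton] at hp; subst hp
  exact evalAff_cst q _

lemma frepr_affine_comp {F : (Fin n → I) → ℝ} (h : FRepr F) (q c : ℚ) :
    FRepr (fun ρ => (q : ℝ) * F ρ + (c : ℝ)) := by
  obtain ⟨L, hcov, hcor⟩ := h
  refine ⟨L.map (fun p => (p.1, aadd (asmul q p.2) (acst n c))), fun ρ => ?_, ?_⟩
  · obtain ⟨p, hp, h⟩ := hcov ρ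
    exact ⟨_, List.mem_map_of_mem hp, h⟩
  · rintro ρ p' hp' h
    rw [List.mem_map] at hp'
    obtain ⟨p, hp, rfl⟩ := hp'
    simp only [evalAff_add', evalAff_smulQ, evalAff_cst]
    rw [hcor ρ p hp h]

lemma frepr_add {F₁ F₂ : (Fin n → I) → ℝ} (h₁ : FRepr F₁) (h₂ : FRepr F₂) :
    FRepr (fun ρ => F₁ ρ + F₂ ρ) := by
  obtain ⟨L₁, hcov₁, hcor₁⟩ := h₁
  obtain ⟨L₂, hcov₂, hcor₂⟩ := h₂
  refine ⟨L₁.flatMap (fun p₁ => L₂.map (fun p₂ => (p₁.1 ∪ p₂.1, aadd p₁.2 p₂.2))),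
    fun ρ => ?_, ?_⟩
  · obtain ⟨p₁, hp₁, h1⟩ := hcov₁ ρ
    obtain ⟨p₂, hp₂, h2⟩ := hcov₂ ρ
    refine ⟨_, List.mem_flatMap.2 ⟨p₁, hp₁, List.mem_map_of_mem hp₂⟩, fun c hc => ?_⟩
    rcases Finset.mem_union.1 hc with h | h
    · exact h1 c h
    · exact h2 c h
  · rintro ρ p' hp' h
    rw [List.mem_flatMap] at hp'
    obtain ⟨p₁, hp₁, hm⟩ := hp'
    rw [List.mem_map] at hm
    obtain ⟨p₂, hp₂, rfl⟩ := hm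
    simp only [evalAff_add']
    rw [hcor₁ ρ p₁ hp₁ (fun c hc => h c (Finset.mem_union_left _ hc)),
      hcor₂ ρ p₂ hp₂ (fun c hc => h c (Finset.mem_union_right _ hc))]

lemma frepr_max {F₁ F₂ : (Fin n → I) → ℝ} (h₁ : FRepr F₁) (h₂ : FRepr F₂) :
    FRepr (fun ρ => max (F₁ ρ) (F₂ ρ)) := by
  obtain ⟨L₁, hcov₁, hcor₁⟩ := h₁
  obtain ⟨L₂, hcov₂, hcor₂⟩ := h₂
  refine ⟨L₁.flatMap (fun p₁ => L₂.flatMap (fun p₂ =>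
      [(insert (leIneq p₁.2 p₂.2) (p₁.1 ∪ p₂.1), p₂.2),
       (insert (leIneq p₂.2 p₁.2) (p₁.1 ∪ p₂.1), p₁.2)])),
    fun ρ => ?_, ?_⟩
  · obtain ⟨p₁, hp₁, h1⟩ := hcov₁ ρ
    obtain ⟨p₂, hp₂, h2⟩ := hcov₂ ρ
    have hu : CondHolds (p₁.1 ∪ p₂.1) (co ρ) := by
      intro c hc
      rcases Finset.mem_union.1 hc with h | h
      · exact h1 c h
      · exact h2 c h
    rcases le_total (p₁.2.evalAff (co ρ)) (p₂.2.evalAff (co ρ)) with hle | hle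
    · refine ⟨_, List.mem_flatMap.2 ⟨p₁, hp₁, List.mem_flatMap.2 ⟨p₂, hp₂,
        List.mem_cons_self⟩⟩, fun c hc => ?_⟩
      rcases Finset.mem_insert.1 hc with rfl | hc
      · exact leIneq_holds.2 hle
      · exact hu c hc
    · refine ⟨_, List.mem_flatMap.2 ⟨p₁, hp₁, List.mem_flatMap.2 ⟨p₂, hp₂,
        List.mem_cons_of_mem _ (List.mem_singleton_self _)⟩⟩, fun c hc => ?_⟩
      rcases Finset.mem_insert.1 hc with rfl | hc
      · exact leIneq_holds.2 hle
      · exact hu c hc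
  · rintro ρ p' hp' h
    rw [List.mem_flatMap] at hp'
    obtain ⟨p₁, hp₁, hm⟩ := hp'
    rw [List.mem_flatMap] at hm
    obtain ⟨p₂, hp₂, hm⟩ := hm
    have e1 : CondHolds (p₁.1 ∪ p₂.1) (co ρ) → p₁.2.evalAff (co ρ) = F₁ ρ ∧
        p₂.2.evalAff (co ρ) = F₂ ρ := fun hu =>
      ⟨hcor₁ ρ p₁ hp₁ (fun c hc => hu c (Finset.mem_union_left _ hc)),
       hcor₂ ρ p₂ hp₂ (fun c hc => hu c (Finset.mem_union_right _ hc))⟩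
    simp only [List.mem_cons, List.mem_singleton, List.not_mem_nil, or_false] at hm
    rcases hm with rfl | rfl
    · have hu : CondHolds (p₁.1 ∪ p₂.1) (co ρ) := fun c hc => h c (Finset.mem_insert_of_mem hc)
      obtain ⟨e11, e22⟩ := e1 hu
      have hle := leIneq_holds.1 (h _ (Finset.mem_insert_self _ _))
      rw [e11, e22] at hle
      simp only [e22]
      exact (max_eq_right hle).symm
    · have hu : CondHolds (p₁.1 ∪ p₂.1) (co ρ) := fun c hc => h c (Finset.mem_insert_of_mem hc)
      obtain ⟨e11, e22⟩ := e1 hu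
      have hle := leIneq_holds.1 (h _ (Finset.mem_insert_self _ _))
      rw [e11, e22] at hle
      simp only [e11]
      exact (max_eq_left hle).symm

lemma frepr_min {F₁ F₂ : (Fin n → I) → ℝ} (h₁ : FRepr F₁) (h₂ : FRepr F₂) :
    FRepr (fun ρ => min (F₁ ρ) (F₂ ρ)) := by
  obtain ⟨L₁, hcov₁, hcor₁⟩ := h₁
  obtain ⟨L₂, hcov₂, hcor₂⟩ := h₂
  refine ⟨L₁.flatMap (fun p₁ => L₂.flatMap (fun p₂ =>
      [(insert (leIneq p₁.2 p₂.2) (p₁.1 ∪ p₂.1), p₁.2),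
       (insert (leIneq p₂.2 p₁.2) (p₁.1 ∪ p₂.1), p₂.2)])),
    fun ρ => ?_, ?_⟩
  · obtain ⟨p₁, hp₁, h1⟩ := hcov₁ ρ
    obtain ⟨p₂, hp₂, h2⟩ := hcov₂ ρ
    have hu : CondHolds (p₁.1 ∪ p₂.1) (co ρ) := by
      intro c hc
      rcases Finset.mem_union.1 hc with h | h
      · exact h1 c h
      · exact h2 c h
    rcases le_total (p₁.2.evalAff (co ρ)) (p₂.2.evalAff (co ρ)) with hle | hle
    · refine ⟨_, List.mem_flatMap.2 ⟨p₁, hp₁, List.mem_flatMap.2 ⟨p₂, hp₂,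
        List.mem_cons_self⟩⟩, fun c hc => ?_⟩
      rcases Finset.mem_insert.1 hc with rfl | hc
      · exact leIneq_holds.2 hle
      · exact hu c hc
    · refine ⟨_, List.mem_flatMap.2 ⟨p₁, hp₁, List.mem_flatMap.2 ⟨p₂, hp₂,
        List.mem_cons_of_mem _ (List.mem_singleton_self _)⟩⟩, fun c hc => ?_⟩
      rcases Finset.mem_insert.1 hc with rfl | hc
      · exact leIneq_holds.2 hle
      · exact hu c hc
  · rintro ρ p' hp' h
    rw [List.mem_flatMap] at hp'
    obtain ⟨p₁, hp₁, hm⟩ := hp'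
    rw [List.mem_flatMap] at hm
    obtain ⟨p₂, hp₂, hm⟩ := hm
    have e1 : CondHolds (p₁.1 ∪ p₂.1) (co ρ) → p₁.2.evalAff (co ρ) = F₁ ρ ∧
        p₂.2.evalAff (co ρ) = F₂ ρ := fun hu =>
      ⟨hcor₁ ρ p₁ hp₁ (fun c hc => hu c (Finset.mem_union_left _ hc)),
       hcor₂ ρ p₂ hp₂ (fun c hc => hu c (Finset.mem_union_right _ hc))⟩
    simp only [List.mem_cons, List.mem_singleton, List.not_mem_nil, or_false] at hm
    rcases hm with rfl | rfl
    · have hu : CondHolds (p₁.1 ∪ p₂.1) (co ρ) := fun c hc => h c (Finset.mem_insert_of_mem hc)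
      obtain ⟨e11, e22⟩ := e1 hu
      have hle := leIneq_holds.1 (h _ (Finset.mem_insert_self _ _))
      rw [e11, e22] at hle
      simp only [e11]
      exact (min_eq_left hle).symm
    · have hu : CondHolds (p₁.1 ∪ p₂.1) (co ρ) := fun c hc => h c (Finset.mem_insert_of_mem hc)
      obtain ⟨e11, e22⟩ := e1 hu
      have hle := leIneq_holds.1 (h _ (Finset.mem_insert_self _ _))
      rw [e11, e22] at hle
      simp only [e22]
      exact (min_eq_right hle).symm

lemma frepr_congr {F G : (Fin n → I) → ℝ} (h : FRepr F) (hFG : ∀ ρ, F ρ = G ρ) : FRepr G := by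
  obtain ⟨L, hcov, hcor⟩ := h
  exact ⟨L, hcov, fun ρ p hp hc => (hcor ρ p hp hc).trans (hFG ρ)⟩

end Luk

namespace Luk
variable {n : ℕ}

lemma coe_max (a b : I) : ((max a b : I) : ℝ) = max (a : ℝ) (b : ℝ) := by
  rcases le_total a b with h | h
  · rw [max_eq_right h, max_eq_right (Subtype.coe_le_coe.2 h)]
  · rw [max_eq_left h, max_eq_left (Subtype.coe_le_coe.2 h)]

lemma coe_min (a b : I) : ((min a b : I) : ℝ) = min (a : ℝ) (b : ℝ) := by
  rcases le_total a b with h | h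
  · rw [min_eq_left h, min_eq_left (Subtype.coe_le_coe.2 h)]
  · rw [min_eq_right h, min_eq_right (Subtype.coe_le_coe.2 h)]

lemma snoc_mono {ρ ρ' : Fin n → I} {x x' : I} (h : ρ ≤ ρ') (hx : x ≤ x') :
    (Fin.snoc ρ x : Fin (n+1) → I) ≤ Fin.snoc ρ' x' := by
  intro j
  refine Fin.lastCases ?_ ?_ j
  · simp only [Fin.snoc_last]; exact hx
  · intro i; simp only [Fin.snoc_castSucc]; exact h i

lemma eval_mono {m : ℕ} (t : LTerm m) : Monotone t.eval := by
  induction t with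
  | var i => exact fun ρ ρ' h => h i
  | scal q t ih =>
    intro ρ ρ' h
    simp only [LTerm.eval]
    rw [← Subtype.coe_le_coe]
    simp only [lukScal]
    have h0 : (0 : ℝ) ≤ (q.1 : ℝ) := by exact_mod_cast q.2.1
    exact mul_le_mul_of_nonneg_left (Subtype.coe_le_coe.2 (ih h)) h0
  | join t₁ t₂ ih₁ ih₂ =>
    intro ρ ρ' h
    exact max_le_max (ih₁ h) (ih₂ h)
  | meet t₁ t₂ ih₁ ih₂ =>
    intro ρ ρ' h
    exact min_le_min (ih₁ h) (ih₂ h)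
  | oplus t₁ t₂ ih₁ ih₂ =>
    intro ρ ρ' h
    simp only [LTerm.eval]
    rw [← Subtype.coe_le_coe]
    simp only [lukAdd]
    exact min_le_min le_rfl
      (add_le_add (Subtype.coe_le_coe.2 (ih₁ h)) (Subtype.coe_le_coe.2 (ih₂ h)))
  | odot t₁ t₂ ih₁ ih₂ =>
    intro ρ ρ' h
    simp only [LTerm.eval]
    rw [← Subtype.coe_le_coe]
    simp only [lukMul]
    refine max_le_max le_rfl ?_
    have h1 := Subtype.coe_le_coe.2 (ih₁ h)
    have h2 := Subtype.coe_le_coe.2 (ih₂ h)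
    linarith
  | mu t ih =>
    intro ρ ρ' h
    simp only [LTerm.eval]
    apply sInf_le_sInf
    intro x hx
    exact le_trans (ih (snoc_mono h le_rfl)) hx
  | nu t ih =>
    intro ρ ρ' h
    simp only [LTerm.eval]
    apply sSup_le_sSup
    intro x hx
    exact le_trans hx (ih (snoc_mono h le_rfl))

lemma lfp_mem {f : I → I} (hf : Monotone f) :
    f (sInf {x | f x ≤ x}) = sInf {x | f x ≤ x} := by
  set p := sInf {x | f x ≤ x} with hp
  have h1 : f p ≤ p := by
    apply le_sInf
    intro x hx
    exact le_trans (hf (sInf_le hx)) hx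
  exact le_antisymm h1 (sInf_le (hf h1))

lemma lfp_le {f : I → I} {x : I} (hx : f x ≤ x) : sInf {x | f x ≤ x} ≤ x := sInf_le hx

lemma gfp_mem {f : I → I} (hf : Monotone f) :
    f (sSup {x | x ≤ f x}) = sSup {x | x ≤ f x} := by
  set p := sSup {x | x ≤ f x} with hp
  have h1 : p ≤ f p := by
    apply sSup_le
    intro x hx
    exact le_trans hx (hf (le_sSup hx))
  exact le_antisymm (le_sSup (hf h1)) h1

lemma le_gfp {f : I → I} {x : I} (hx : x ≤ f x) : x ≤ sSup {x | x ≤ f x} := le_sSup hx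

lemma co_snoc (ρ : Fin n → I) (x : I) :
    co (Fin.snoc ρ x : Fin (n+1) → I) = Fin.snoc (co ρ) (x : ℝ) := by
  funext j
  refine Fin.lastCases ?_ ?_ j
  · simp [co, Fin.snoc_last]
  · intro i; simp [co, Fin.snoc_castSucc]

end Luk

namespace Luk
variable {n : ℕ}

def bigAnd : List (List (Finset (AffIneq n))) → List (Finset (AffIneq n)) :=
  fun Ls => Ls.foldr andRep [∅]

lemma dsat_bigAnd {Ls : List (List (Finset (AffIneq n)))} {r : Fin n → ℝ} :
    DSat (bigAnd Ls) r ↔ ∀ l ∈ Ls, DSat l r := by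
  induction Ls with
  | nil => simp [bigAnd, DSat, CondHolds]
  | cons l Ls ih =>
    rw [bigAnd, List.foldr_cons]
    rw [show List.foldr andRep [∅] Ls = bigAnd Ls from rfl] at *
    rw [dsat_andRep, ih]
    constructor
    · rintro ⟨h1, h2⟩ m hm
      rcases List.mem_cons.1 hm with rfl | hm
      · exact h1
      · exact h2 m hm
    · intro h
      exact ⟨h l (List.mem_cons_self), fun m hm => h m (List.mem_cons_of_mem _ hm)⟩

def lastCoef (e : Affine (n+1)) : ℚ := e.1 (Fin.last n)

def freePart (e : Affine (n+1)) : Affine n := (fun j => e.1 j.castSucc, e.2)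

lemma evalAff_snoc (e : Affine (n+1)) (r : Fin n → ℝ) (x : ℝ) :
    e.evalAff (Fin.snoc r x) = (lastCoef e : ℝ) * x + (freePart e).evalAff r := by
  simp only [Affine.evalAff, lastCoef, freePart]
  rw [Fin.sum_univ_castSucc]
  simp only [Fin.snoc_castSucc, Fin.snoc_last]
  ring

def substLast (e : Affine (n+1)) (g : Affine n) : Affine n :=
  aadd (freePart e) (asmul (lastCoef e) g)

lemma substLast_eval (e : Affine (n+1)) (g : Affine n) (r : Fin n → ℝ) :
    (substLast e g).evalAff r = e.evalAff (Fin.snoc r (g.evalAff r)) := by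
  rw [substLast, evalAff_add', evalAff_smulQ, evalAff_snoc]; ring

def substIneq (c : AffIneq (n+1)) (g : Affine n) : AffIneq n :=
  (substLast c.1 g, substLast c.2.1 g, c.2.2)

lemma substIneq_holds {c : AffIneq (n+1)} {g : Affine n} {r : Fin n → ℝ} :
    (substIneq c g).holds r ↔ c.holds (Fin.snoc r (g.evalAff r)) := by
  obtain ⟨a, b, s⟩ := c
  simp only [substIneq, AffIneq.holds, substLast_eval]

/-- the net coefficient of the last variable in an inequality -/
def dcoef (c : AffIneq (n+1)) : ℚ := lastCoef c.2.1 - lastCoef c.1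

/-- the variable-free part `lhs-free − rhs-free` -/
def wpart (c : AffIneq (n+1)) : Affine n := asub (freePart c.1) (freePart c.2.1)

/-- candidate: the solution for `x` of the equality associated to `c` -/
def bdCand (c : AffIneq (n+1)) : Affine n := asmul (1 / dcoef c) (wpart c)

lemma holds_snoc_iff (c : AffIneq (n+1)) (r : Fin n → ℝ) (x : ℝ) :
    c.holds (Fin.snoc r x) ↔
      (if c.2.2 then (wpart c).evalAff r < (dcoef c : ℝ) * x
        else (wpart c).evalAff r ≤ (dcoef c : ℝ) * x) := by
  obtain ⟨a, b, s⟩ := c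
  simp only [AffIneq.holds, wpart, dcoef, evalAff_sub', evalAff_snoc]
  push_cast
  cases s <;> simp only [if_true, if_false, Bool.false_eq_true] <;> constructor <;>
    intro h <;> nlinarith

lemma bdCand_eval {c : AffIneq (n+1)} (hd : dcoef c ≠ 0) (r : Fin n → ℝ) :
    (dcoef c : ℝ) * (bdCand c).evalAff r = (wpart c).evalAff r := by
  rw [bdCand, evalAff_smulQ]
  have : ((dcoef c : ℚ) : ℝ) ≠ 0 := by exact_mod_cast hd
  push_cast
  field_simp

lemma exists_lower {S : Finset (AffIneq (n+1))} {r : Fin n → ℝ} {p : ℝ}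
    (hp : CondHolds S (Fin.snoc r p))
    (hbd : ∀ c ∈ S, dcoef c ≠ 0 → (bdCand c).evalAff r ≠ p)
    (h0 : 0 < p) : ∃ y : ℝ, 0 ≤ y ∧ y < p ∧ CondHolds S (Fin.snoc r y) := by
  classical
  set M : Finset ℝ := insert 0 ((S.image fun c => (bdCand c).evalAff r).filter (· < p)) with hM
  have hM0 : (0 : ℝ) ∈ M := Finset.mem_insert_self _ _
  set x₀ : ℝ := M.max' ⟨0, hM0⟩ with hx₀
  have hx0nn : 0 ≤ x₀ := Finset.le_max' M 0 hM0
  have hx0lt : x₀ < p := by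
    refine (Finset.max'_lt_iff M ⟨0, hM0⟩).2 ?_
    intro b hb
    rcases Finset.mem_insert.1 hb with rfl | hb
    · exact h0
    · exact (Finset.mem_filter.1 hb).2
  refine ⟨(x₀ + p) / 2, by linarith, by linarith, ?_⟩
  intro c hc
  have hcp := hp c hc
  rcases eq_or_ne (dcoef c) 0 with hd | hd
  · rw [holds_snoc_iff] at hcp ⊢
    simp only [hd, Rat.cast_zero, zero_mul] at hcp ⊢
    exact hcp
  · have hwp : (wpart c).evalAff r ≤ (dcoef c : ℝ) * p := by
      rw [holds_snoc_iff] at hcp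
      split at hcp <;> linarith
    have hdr : ((dcoef c : ℚ) : ℝ) ≠ 0 := by exact_mod_cast hd
    have hveq := bdCand_eval hd r
    set v : ℝ := (bdCand c).evalAff r with hv
    have hvne : v ≠ p := hbd c hc hd
    suffices hlt : (wpart c).evalAff r < (dcoef c : ℝ) * ((x₀ + p) / 2) by
      rw [holds_snoc_iff]; split <;> linarith
    rcases hdr.lt_or_gt with hneg | hpos
    · -- dcoef < 0 : v ≥ p, so v > p > y
      have hvp : p ≤ v := by nlinarith
      have : p < v := lt_of_le_of_ne hvp (Ne.symm hvne)
      nlinarith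
    · -- dcoef > 0 : v ≤ p, v ≠ p, so v ∈ M, v ≤ x₀ < y
      have hvp : v ≤ p := by nlinarith
      have hvltp : v < p := lt_of_le_of_ne hvp hvne
      have hvM : v ∈ M := Finset.mem_insert_of_mem
        (Finset.mem_filter.2 ⟨Finset.mem_image_of_mem _ hc, hvltp⟩)
      have hvx0 : v ≤ x₀ := Finset.le_max' M v hvM
      nlinarith
            
lemma exists_upper {S : Finset (AffIneq (n+1))} {r : Fin n → ℝ} {p : ℝ}
    (hp : CondHolds S (Fin.snoc r p))
    (hbd : ∀ c ∈ S, dcoef c ≠ 0 → (bdCand c).evalAff r ≠ p)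
    (h1 : p < 1) : ∃ y : ℝ, y ≤ 1 ∧ p < y ∧ CondHolds S (Fin.snoc r y) := by
  classical
  set M : Finset ℝ := insert 1 ((S.image fun c => (bdCand c).evalAff r).filter (p < ·)) with hM
  have hM1 : (1 : ℝ) ∈ M := Finset.mem_insert_self _ _
  set x₁ : ℝ := M.min' ⟨1, hM1⟩ with hx₁
  have hx1le : x₁ ≤ 1 := Finset.min'_le M 1 hM1
  have hx1gt : p < x₁ := by
    refine (Finset.lt_min'_iff M ⟨1, hM1⟩).2 ?_
    intro b hb
    rcases Finset.mem_insert.1 hb with rfl | hb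
    · exact h1
    · exact (Finset.mem_filter.1 hb).2
  refine ⟨(p + x₁) / 2, by linarith, by linarith, ?_⟩
  intro c hc
  have hcp := hp c hc
  rcases eq_or_ne (dcoef c) 0 with hd | hd
  · rw [holds_snoc_iff] at hcp ⊢
    simp only [hd, Rat.cast_zero, zero_mul] at hcp ⊢
    exact hcp
  · have hwp : (wpart c).evalAff r ≤ (dcoef c : ℝ) * p := by
      rw [holds_snoc_iff] at hcp
      split at hcp <;> linarith
    have hdr : ((dcoef c : ℚ) : ℝ) ≠ 0 := by exact_mod_cast hd
    have hveq := bdCand_eval hd r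
    set v : ℝ := (bdCand c).evalAff r with hv
    have hvne : v ≠ p := hbd c hc hd
    suffices hlt : (wpart c).evalAff r < (dcoef c : ℝ) * ((p + x₁) / 2) by
      rw [holds_snoc_iff]; split <;> linarith
    rcases hdr.lt_or_gt with hneg | hpos
    · -- dcoef < 0 : v ≥ p, v ≠ p so v > p, v ∈ M, x₁ ≤ v, y < x₁ ≤ v
      have hvp : p ≤ v := by nlinarith
      have hvgtp : p < v := lt_of_le_of_ne hvp (Ne.symm hvne)
      have hvM : v ∈ M := Finset.mem_insert_of_mem
        (Finset.mem_filter.2 ⟨Finset.mem_image_of_mem _ hc, hvgtp⟩)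
      have hvx1 : x₁ ≤ v := Finset.min'_le M v hvM
      nlinarith
    · -- dcoef > 0 : w ≤ d p < d y
      nlinarith

end Luk

namespace Luk
variable {n : ℕ}

def fixC (e : Affine (n+1)) : Affine n := asmul (1 / (1 - lastCoef e)) (freePart e)

def cands (L : Rep (n+1)) : List (Affine n) :=
  acst n 0 :: acst n 1 ::
    (L.map (fun p => fixC p.2) ++ L.flatMap (fun p => p.1.toList.map bdCand))

lemma hit_mu (t : LTerm (n+1)) (L : Rep (n+1))
    (hcov : ∀ ρ : Fin (n+1) → I, ∃ p ∈ L, CondHolds p.1 (co ρ))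
    (hcor : ∀ ρ : Fin (n+1) → I, ∀ p ∈ L, CondHolds p.1 (co ρ) →
      p.2.evalAff (co ρ) = ((t.eval ρ : I) : ℝ))
    (ρ : Fin n → I) :
    ∃ g ∈ cands L,
      g.evalAff (co ρ) = ((sInf {x : I | t.eval (Fin.snoc ρ x) ≤ x} : I) : ℝ) := by
  classical
  set p : I := sInf {x : I | t.eval (Fin.snoc ρ x) ≤ x} with hpdef
  have hmono : Monotone (fun x : I => t.eval (Fin.snoc ρ x)) :=
    fun x y hxy => eval_mono t (snoc_mono le_rfl hxy)
  have hfix : t.eval (Fin.snoc ρ p) = p := lfp_mem hmono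
  obtain ⟨q, hqL, hq⟩ := hcov (Fin.snoc ρ p)
  have hcorp := hcor (Fin.snoc ρ p) q hqL hq
  rw [hfix] at hcorp
  rw [co_snoc] at hq hcorp
  rw [evalAff_snoc] at hcorp
  by_cases ha : lastCoef q.2 = 1
  · have hbeta : (freePart q.2).evalAff (co ρ) = 0 := by
      rw [ha] at hcorp; push_cast at hcorp; linarith
    by_cases hp0 : ((p : I) : ℝ) = 0
    · refine ⟨acst n 0, List.mem_cons_self, ?_⟩
      rw [evalAff_cst]; push_cast; exact hp0.symm
    · by_cases hbd : ∀ c ∈ q.1, dcoef c ≠ 0 → (bdCand c).evalAff (co ρ) ≠ ((p : I) : ℝ)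
      · exfalso
        have h0p : 0 < ((p : I) : ℝ) := lt_of_le_of_ne p.2.1 (Ne.symm hp0)
        obtain ⟨y, hy0, hyp, hyS⟩ := exists_lower hq hbd h0p
        have hy1 : y ≤ 1 := le_trans hyp.le p.2.2
        set yI : I := (⟨y, hy0, hy1⟩ : I) with hyIdef
        have hSy : CondHolds q.1 (co (Fin.snoc ρ yI)) := by rw [co_snoc]; exact hyS
        have hey := hcor (Fin.snoc ρ yI) q hqL hSy
        rw [co_snoc, evalAff_snoc] at hey
        have hev : ((t.eval (Fin.snoc ρ yI) : I) : ℝ) = y := by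
          rw [ha, hbeta] at hey; push_cast at hey; linarith
        have hple : p ≤ yI := sInf_le (show t.eval (Fin.snoc ρ yI) ≤ yI by
          rw [← Subtype.coe_le_coe]; rw [hev])
        have : ((p : I) : ℝ) ≤ y := Subtype.coe_le_coe.2 hple
        linarith
      · push_neg at hbd
        obtain ⟨c, hcS, hcd, hceq⟩ := hbd
        refine ⟨bdCand c, ?_, hceq⟩
        apply List.mem_cons_of_mem; apply List.mem_cons_of_mem
        exact List.mem_append.2 (Or.inr
          (List.mem_flatMap.2 ⟨q, hqL, List.mem_map.2 ⟨c, Finset.mem_toList.2 hcS, rfl⟩⟩))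
  · refine ⟨fixC q.2, ?_, ?_⟩
    · apply List.mem_cons_of_mem; apply List.mem_cons_of_mem
      exact List.mem_append.2 (Or.inl (List.mem_map_of_mem hqL))
    · rw [fixC, evalAff_smulQ]
      have h1a : (1 : ℚ) - lastCoef q.2 ≠ 0 := sub_ne_zero.2 (Ne.symm ha)
      have h1ar : (1 : ℝ) - (lastCoef q.2 : ℝ) ≠ 0 := by exact_mod_cast h1a
      push_cast
      field_simp
      nlinarith [hcorp]

lemma hit_nu (t : LTerm (n+1)) (L : Rep (n+1))
    (hcov : ∀ ρ : Fin (n+1) → I, ∃ p ∈ L, CondHolds p.1 (co ρ))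
    (hcor : ∀ ρ : Fin (n+1) → I, ∀ p ∈ L, CondHolds p.1 (co ρ) →
      p.2.evalAff (co ρ) = ((t.eval ρ : I) : ℝ))
    (ρ : Fin n → I) :
    ∃ g ∈ cands L,
      g.evalAff (co ρ) = ((sSup {x : I | x ≤ t.eval (Fin.snoc ρ x)} : I) : ℝ) := by
  classical
  set p : I := sSup {x : I | x ≤ t.eval (Fin.snoc ρ x)} with hpdef
  have hmono : Monotone (fun x : I => t.eval (Fin.snoc ρ x)) :=
    fun x y hxy => eval_mono t (snoc_mono le_rfl hxy)
  have hfix : t.eval (Fin.snoc ρ p) = p := gfp_mem hmono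
  obtain ⟨q, hqL, hq⟩ := hcov (Fin.snoc ρ p)
  have hcorp := hcor (Fin.snoc ρ p) q hqL hq
  rw [hfix] at hcorp
  rw [co_snoc] at hq hcorp
  rw [evalAff_snoc] at hcorp
  by_cases ha : lastCoef q.2 = 1
  · have hbeta : (freePart q.2).evalAff (co ρ) = 0 := by
      rw [ha] at hcorp; push_cast at hcorp; linarith
    by_cases hp1 : ((p : I) : ℝ) = 1
    · refine ⟨acst n 1, List.mem_cons_of_mem _ (List.mem_cons_self), ?_⟩
      rw [evalAff_cst]; push_cast; exact hp1.symm
    · by_cases hbd : ∀ c ∈ q.1, dcoef c ≠ 0 → (bdCand c).evalAff (co ρ) ≠ ((p : I) : ℝ)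
      · exfalso
        have h1p : ((p : I) : ℝ) < 1 := lt_of_le_of_ne p.2.2 hp1
        obtain ⟨y, hy1, hyp, hyS⟩ := exists_upper hq hbd h1p
        have hy0 : 0 ≤ y := le_trans p.2.1 hyp.le
        set yI : I := (⟨y, hy0, hy1⟩ : I) with hyIdef
        have hSy : CondHolds q.1 (co (Fin.snoc ρ yI)) := by rw [co_snoc]; exact hyS
        have hey := hcor (Fin.snoc ρ yI) q hqL hSy
        rw [co_snoc, evalAff_snoc] at hey
        have hev : ((t.eval (Fin.snoc ρ yI) : I) : ℝ) = y := by
          rw [ha, hbeta] at hey; push_cast at hey; linarith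
        have hple : yI ≤ p := le_sSup (show yI ≤ t.eval (Fin.snoc ρ yI) by
          rw [← Subtype.coe_le_coe]; rw [hev])
        have : y ≤ ((p : I) : ℝ) := Subtype.coe_le_coe.2 hple
        linarith
      · push_neg at hbd
        obtain ⟨c, hcS, hcd, hceq⟩ := hbd
        refine ⟨bdCand c, ?_, hceq⟩
        apply List.mem_cons_of_mem; apply List.mem_cons_of_mem
        exact List.mem_append.2 (Or.inr
          (List.mem_flatMap.2 ⟨q, hqL, List.mem_map.2 ⟨c, Finset.mem_toList.2 hcS, rfl⟩⟩))
  · refine ⟨fixC q.2, ?_, ?_⟩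
    · apply List.mem_cons_of_mem; apply List.mem_cons_of_mem
      exact List.mem_append.2 (Or.inl (List.mem_map_of_mem hqL))
    · rw [fixC, evalAff_smulQ]
      have h1a : (1 : ℚ) - lastCoef q.2 ≠ 0 := sub_ne_zero.2 (Ne.symm ha)
      have h1ar : (1 : ℝ) - (lastCoef q.2 : ℝ) ≠ 0 := by exact_mod_cast h1a
      push_cast
      field_simp
      nlinarith [hcorp]

def ValMu (t : LTerm (n+1)) (g : Affine n) (ρ : Fin n → I) : Prop :=
  ∃ x : I, (x : ℝ) = g.evalAff (co ρ) ∧ t.eval (Fin.snoc ρ x) ≤ x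

def ValNu (t : LTerm (n+1)) (g : Affine n) (ρ : Fin n → I) : Prop :=
  ∃ x : I, (x : ℝ) = g.evalAff (co ρ) ∧ x ≤ t.eval (Fin.snoc ρ x)

def VrepMu (L : Rep (n+1)) (g : Affine n) : List (Finset (AffIneq n)) :=
  L.map (fun p => insert (leIneq (acst n 0) g) (insert (leIneq g (acst n 1))
    (insert (leIneq (substLast p.2 g) g) (p.1.image (fun c => substIneq c g)))))

def VrepNu (L : Rep (n+1)) (g : Affine n) : List (Finset (AffIneq n)) :=
  L.map (fun p => insert (leIneq (acst n 0) g) (insert (leIneq g (acst n 1))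
    (insert (leIneq g (substLast p.2 g)) (p.1.image (fun c => substIneq c g)))))

lemma valMu_iff (t : LTerm (n+1)) (L : Rep (n+1))
    (hcov : ∀ ρ : Fin (n+1) → I, ∃ p ∈ L, CondHolds p.1 (co ρ))
    (hcor : ∀ ρ : Fin (n+1) → I, ∀ p ∈ L, CondHolds p.1 (co ρ) →
      p.2.evalAff (co ρ) = ((t.eval ρ : I) : ℝ))
    (g : Affine n) (ρ : Fin n → I) :
    ValMu t g ρ ↔ DSat (VrepMu L g) (co ρ) := by
  constructor
  · rintro ⟨x, hx, hpre⟩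
    obtain ⟨q, hqL, hq⟩ := hcov (Fin.snoc ρ x)
    have hval := hcor (Fin.snoc ρ x) q hqL hq
    rw [co_snoc] at hq hval
    have hgx : g.evalAff (co ρ) = (x : ℝ) := hx.symm
    refine ⟨_, List.mem_map_of_mem hqL, ?_⟩
    intro c hc
    rcases Finset.mem_insert.1 hc with rfl | hc
    · rw [leIneq_holds, evalAff_cst, hgx]; exact_mod_cast x.2.1
    rcases Finset.mem_insert.1 hc with rfl | hc
    · rw [leIneq_holds, evalAff_cst, hgx]; exact_mod_cast x.2.2
    rcases Finset.mem_insert.1 hc with rfl | hc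
    · rw [leIneq_holds, substLast_eval, hgx, hval]
      exact Subtype.coe_le_coe.2 hpre
    · obtain ⟨c₀, hc₀, rfl⟩ := Finset.mem_image.1 hc
      rw [substIneq_holds, hgx]
      exact hq c₀ hc₀
  · rintro ⟨T, hT, hall⟩
    obtain ⟨q, hqL, rfl⟩ := List.mem_map.1 hT
    have h0 : (0 : ℝ) ≤ g.evalAff (co ρ) := by
      have := hall _ (Finset.mem_insert_self _ _)
      rw [leIneq_holds, evalAff_cst] at this; exact_mod_cast this
    have h1 : g.evalAff (co ρ) ≤ 1 := by
      have := hall _ (Finset.mem_insert_of_mem (Finset.mem_insert_self _ _))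
      rw [leIneq_holds, evalAff_cst] at this; exact_mod_cast this
    set x : I := (⟨g.evalAff (co ρ), h0, h1⟩ : I) with hxdef
    have hq : CondHolds q.1 (co (Fin.snoc ρ x)) := by
      rw [co_snoc]
      intro c hc
      have := hall _ (Finset.mem_insert_of_mem (Finset.mem_insert_of_mem
        (Finset.mem_insert_of_mem (Finset.mem_image_of_mem _ hc))))
      rw [substIneq_holds] at this
      exact this
    have hval := hcor (Fin.snoc ρ x) q hqL hq
    rw [co_snoc] at hval
    have hsub := hall _ (Finset.mem_insert_of_mem
      (Finset.mem_insert_of_mem (Finset.mem_insert_self _ _)))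
    rw [leIneq_holds, substLast_eval] at hsub
    refine ⟨x, rfl, ?_⟩
    rw [← Subtype.coe_le_coe]
    calc ((t.eval (Fin.snoc ρ x) : I) : ℝ)
        = q.2.evalAff (Fin.snoc (co ρ) ((x : I) : ℝ)) := hval.symm
      _ ≤ g.evalAff (co ρ) := hsub
      _ = ((x : I) : ℝ) := rfl

lemma valNu_iff (t : LTerm (n+1)) (L : Rep (n+1))
    (hcov : ∀ ρ : Fin (n+1) → I, ∃ p ∈ L, CondHolds p.1 (co ρ))
    (hcor : ∀ ρ : Fin (n+1) → I, ∀ p ∈ L, CondHolds p.1 (co ρ) →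
      p.2.evalAff (co ρ) = ((t.eval ρ : I) : ℝ))
    (g : Affine n) (ρ : Fin n → I) :
    ValNu t g ρ ↔ DSat (VrepNu L g) (co ρ) := by
  constructor
  · rintro ⟨x, hx, hpre⟩
    obtain ⟨q, hqL, hq⟩ := hcov (Fin.snoc ρ x)
    have hval := hcor (Fin.snoc ρ x) q hqL hq
    rw [co_snoc] at hq hval
    have hgx : g.evalAff (co ρ) = (x : ℝ) := hx.symm
    refine ⟨_, List.mem_map_of_mem hqL, ?_⟩
    intro c hc
    rcases Finset.mem_insert.1 hc with rfl | hc
    · rw [leIneq_holds, evalAff_cst, hgx]; exact_mod_cast x.2.1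
    rcases Finset.mem_insert.1 hc with rfl | hc
    · rw [leIneq_holds, evalAff_cst, hgx]; exact_mod_cast x.2.2
    rcases Finset.mem_insert.1 hc with rfl | hc
    · rw [leIneq_holds, substLast_eval, hgx, hval]
      exact Subtype.coe_le_coe.2 hpre
    · obtain ⟨c₀, hc₀, rfl⟩ := Finset.mem_image.1 hc
      rw [substIneq_holds, hgx]
      exact hq c₀ hc₀
  · rintro ⟨T, hT, hall⟩
    obtain ⟨q, hqL, rfl⟩ := List.mem_map.1 hT
    have h0 : (0 : ℝ) ≤ g.evalAff (co ρ) := by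
      have := hall _ (Finset.mem_insert_self _ _)
      rw [leIneq_holds, evalAff_cst] at this; exact_mod_cast this
    have h1 : g.evalAff (co ρ) ≤ 1 := by
      have := hall _ (Finset.mem_insert_of_mem (Finset.mem_insert_self _ _))
      rw [leIneq_holds, evalAff_cst] at this; exact_mod_cast this
    set x : I := (⟨g.evalAff (co ρ), h0, h1⟩ : I) with hxdef
    have hq : CondHolds q.1 (co (Fin.snoc ρ x)) := by
      rw [co_snoc]
      intro c hc
      have := hall _ (Finset.mem_insert_of_mem (Finset.mem_insert_of_mem
        (Finset.mem_insert_of_mem (Finset.mem_image_of_mem _ hc))))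
      rw [substIneq_holds] at this
      exact this
    have hval := hcor (Fin.snoc ρ x) q hqL hq
    rw [co_snoc] at hval
    have hsub := hall _ (Finset.mem_insert_of_mem
      (Finset.mem_insert_of_mem (Finset.mem_insert_self _ _)))
    rw [leIneq_holds, substLast_eval] at hsub
    refine ⟨x, rfl, ?_⟩
    rw [← Subtype.coe_le_coe]
    calc ((x : I) : ℝ) = g.evalAff (co ρ) := rfl
      _ ≤ q.2.evalAff (Fin.snoc (co ρ) ((x : I) : ℝ)) := hsub
      _ = ((t.eval (Fin.snoc ρ x) : I) : ℝ) := hval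

end Luk

namespace Luk
variable {n : ℕ}

def QLMu (L : Rep (n+1)) (g : Affine n) : List (Finset (AffIneq n)) :=
  andRep (VrepMu L g)
    (bigAnd ((cands L).map (fun h => notRep (VrepMu L h) ++ [{leIneq g h}])))

def QLNu (L : Rep (n+1)) (g : Affine n) : List (Finset (AffIneq n)) :=
  andRep (VrepNu L g)
    (bigAnd ((cands L).map (fun h => notRep (VrepNu L h) ++ [{leIneq h g}])))

lemma frepr_mu (t : LTerm (n+1))
    (IH : FRepr (fun ρ : Fin (n+1) → I => ((t.eval ρ : I) : ℝ))) :
    FRepr (fun ρ : Fin n → I =>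
      ((sInf {x : I | t.eval (Fin.snoc ρ x) ≤ x} : I) : ℝ)) := by
  classical
  obtain ⟨L, hcov, hcor⟩ := IH
  have hvalge : ∀ g ρ, ValMu t g ρ →
      ((sInf {x : I | t.eval (Fin.snoc ρ x) ≤ x} : I) : ℝ) ≤ g.evalAff (co ρ) := by
    rintro g ρ ⟨x, hx, hpre⟩
    rw [← hx]
    exact Subtype.coe_le_coe.2 (sInf_le hpre)
  have hhit : ∀ ρ, ∃ g ∈ cands L,
      g.evalAff (co ρ) = ((sInf {x : I | t.eval (Fin.snoc ρ x) ≤ x} : I) : ℝ) ∧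
      ValMu t g ρ := by
    intro ρ
    obtain ⟨g, hg, hge⟩ := hit_mu t L hcov hcor ρ
    refine ⟨g, hg, hge, sInf {x : I | t.eval (Fin.snoc ρ x) ≤ x}, hge.symm, ?_⟩
    have hmono : Monotone (fun x : I => t.eval (Fin.snoc ρ x)) :=
      fun x y hxy => eval_mono t (snoc_mono le_rfl hxy)
    exact le_of_eq (lfp_mem hmono)
  have hQsem : ∀ g ρ, DSat (QLMu L g) (co ρ) ↔
      (ValMu t g ρ ∧ ∀ h ∈ cands L,
        ¬ ValMu t h ρ ∨ g.evalAff (co ρ) ≤ h.evalAff (co ρ)) := by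
    intro g ρ
    rw [QLMu, dsat_andRep, dsat_bigAnd, ← valMu_iff t L hcov hcor]
    constructor
    · rintro ⟨h1, h2⟩
      refine ⟨h1, fun h hh => ?_⟩
      have := h2 _ (List.mem_map_of_mem hh)
      rw [dsat_append, dsat_notRep] at this
      rcases this with hnot | hsat
      · exact Or.inl (fun hv => hnot ((valMu_iff t L hcov hcor h ρ).1 hv))
      · obtain ⟨T, hT, hTh⟩ := hsat
        rw [List.mem_singleton] at hT; subst hT
        exact Or.inr (leIneq_holds.1 (hTh _ (Finset.mem_singleton_self _)))
    · rintro ⟨h1, h2⟩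
      refine ⟨h1, fun l hl => ?_⟩
      obtain ⟨h, hh, rfl⟩ := List.mem_map.1 hl
      rw [dsat_append, dsat_notRep]
      rcases h2 h hh with hnv | hle
      · exact Or.inl (fun hs => hnv ((valMu_iff t L hcov hcor h ρ).2 hs))
      · exact Or.inr ⟨_, List.mem_singleton_self _, fun c hc => by
          rw [Finset.mem_singleton] at hc; subst hc; exact leIneq_holds.2 hle⟩
  refine ⟨(cands L).flatMap (fun g => (QLMu L g).map (fun T => (T, g))), ?_, ?_⟩
  · intro ρ
    obtain ⟨g₀, hg₀, hg₀e, hg₀v⟩ := hhit ρ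
    obtain ⟨gm, hgmmem, hgmmin⟩ := Finset.exists_min_image
      ((cands L).toFinset.filter (fun h => ValMu t h ρ))
      (fun h => h.evalAff (co ρ))
      ⟨g₀, Finset.mem_filter.2 ⟨List.mem_toFinset.2 hg₀, hg₀v⟩⟩
    obtain ⟨hgmc, hgmv⟩ := Finset.mem_filter.1 hgmmem
    have hQ : DSat (QLMu L gm) (co ρ) := by
      rw [hQsem]
      refine ⟨hgmv, fun h hh => ?_⟩
      by_cases hv : ValMu t h ρ
      · exact Or.inr (hgmmin h (Finset.mem_filter.2 ⟨List.mem_toFinset.2 hh, hv⟩))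
      · exact Or.inl hv
    obtain ⟨T, hT, hTh⟩ := hQ
    exact ⟨(T, gm), List.mem_flatMap.2 ⟨gm, List.mem_toFinset.1 hgmc,
      List.mem_map_of_mem hT⟩, hTh⟩
  · rintro ρ pr hpr hprh
    obtain ⟨g, hg, hTm⟩ := List.mem_flatMap.1 hpr
    obtain ⟨T, hT, rfl⟩ := List.mem_map.1 hTm
    have hQ : DSat (QLMu L g) (co ρ) := ⟨T, hT, hprh⟩
    rw [hQsem] at hQ
    obtain ⟨hval, hmin⟩ := hQ
    have h1 := hvalge g ρ hval
    obtain ⟨g₀, hg₀, hg₀e, hg₀v⟩ := hhit ρ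
    have h2 : g.evalAff (co ρ) ≤ ((sInf {x : I | t.eval (Fin.snoc ρ x) ≤ x} : I) : ℝ) := by
      rcases hmin g₀ hg₀ with hn | hl
      · exact absurd hg₀v hn
      · rw [← hg₀e]; exact hl
    exact le_antisymm h2 h1

lemma frepr_nu (t : LTerm (n+1))
    (IH : FRepr (fun ρ : Fin (n+1) → I => ((t.eval ρ : I) : ℝ))) :
    FRepr (fun ρ : Fin n → I =>
      ((sSup {x : I | x ≤ t.eval (Fin.snoc ρ x)} : I) : ℝ)) := by
  classical
  obtain ⟨L, hcov, hcor⟩ := IH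
  have hvalge : ∀ g ρ, ValNu t g ρ →
      g.evalAff (co ρ) ≤ ((sSup {x : I | x ≤ t.eval (Fin.snoc ρ x)} : I) : ℝ) := by
    rintro g ρ ⟨x, hx, hpre⟩
    rw [← hx]
    exact Subtype.coe_le_coe.2 (le_sSup hpre)
  have hhit : ∀ ρ, ∃ g ∈ cands L,
      g.evalAff (co ρ) = ((sSup {x : I | x ≤ t.eval (Fin.snoc ρ x)} : I) : ℝ) ∧
      ValNu t g ρ := by
    intro ρ
    obtain ⟨g, hg, hge⟩ := hit_nu t L hcov hcor ρ
    refine ⟨g, hg, hge, sSup {x : I | x ≤ t.eval (Fin.snoc ρ x)}, hge.symm, ?_⟩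
    have hmono : Monotone (fun x : I => t.eval (Fin.snoc ρ x)) :=
      fun x y hxy => eval_mono t (snoc_mono le_rfl hxy)
    exact ge_of_eq (gfp_mem hmono)
  have hQsem : ∀ g ρ, DSat (QLNu L g) (co ρ) ↔
      (ValNu t g ρ ∧ ∀ h ∈ cands L,
        ¬ ValNu t h ρ ∨ h.evalAff (co ρ) ≤ g.evalAff (co ρ)) := by
    intro g ρ
    rw [QLNu, dsat_andRep, dsat_bigAnd, ← valNu_iff t L hcov hcor]
    constructor
    · rintro ⟨h1, h2⟩
      refine ⟨h1, fun h hh => ?_⟩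
      have := h2 _ (List.mem_map_of_mem hh)
      rw [dsat_append, dsat_notRep] at this
      rcases this with hnot | hsat
      · exact Or.inl (fun hv => hnot ((valNu_iff t L hcov hcor h ρ).1 hv))
      · obtain ⟨T, hT, hTh⟩ := hsat
        rw [List.mem_singleton] at hT; subst hT
        exact Or.inr (leIneq_holds.1 (hTh _ (Finset.mem_singleton_self _)))
    · rintro ⟨h1, h2⟩
      refine ⟨h1, fun l hl => ?_⟩
      obtain ⟨h, hh, rfl⟩ := List.mem_map.1 hl
      rw [dsat_append, dsat_notRep]
      rcases h2 h hh with hnv | hle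
      · exact Or.inl (fun hs => hnv ((valNu_iff t L hcov hcor h ρ).2 hs))
      · exact Or.inr ⟨_, List.mem_singleton_self _, fun c hc => by
          rw [Finset.mem_singleton] at hc; subst hc; exact leIneq_holds.2 hle⟩
  refine ⟨(cands L).flatMap (fun g => (QLNu L g).map (fun T => (T, g))), ?_, ?_⟩
  · intro ρ
    obtain ⟨g₀, hg₀, hg₀e, hg₀v⟩ := hhit ρ
    obtain ⟨gm, hgmmem, hgmmax⟩ := Finset.exists_max_image
      ((cands L).toFinset.filter (fun h => ValNu t h ρ))
      (fun h => h.evalAff (co ρ))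
      ⟨g₀, Finset.mem_filter.2 ⟨List.mem_toFinset.2 hg₀, hg₀v⟩⟩
    obtain ⟨hgmc, hgmv⟩ := Finset.mem_filter.1 hgmmem
    have hQ : DSat (QLNu L gm) (co ρ) := by
      rw [hQsem]
      refine ⟨hgmv, fun h hh => ?_⟩
      by_cases hv : ValNu t h ρ
      · exact Or.inr (hgmmax h (Finset.mem_filter.2 ⟨List.mem_toFinset.2 hh, hv⟩))
      · exact Or.inl hv
    obtain ⟨T, hT, hTh⟩ := hQ
    exact ⟨(T, gm), List.mem_flatMap.2 ⟨gm, List.mem_toFinset.1 hgmc,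
      List.mem_map_of_mem hT⟩, hTh⟩
  · rintro ρ pr hpr hprh
    obtain ⟨g, hg, hTm⟩ := List.mem_flatMap.1 hpr
    obtain ⟨T, hT, rfl⟩ := List.mem_map.1 hTm
    have hQ : DSat (QLNu L g) (co ρ) := ⟨T, hT, hprh⟩
    rw [hQsem] at hQ
    obtain ⟨hval, hmax⟩ := hQ
    have h1 := hvalge g ρ hval
    obtain ⟨g₀, hg₀, hg₀e, hg₀v⟩ := hhit ρ
    have h2 : ((sSup {x : I | x ≤ t.eval (Fin.snoc ρ x)} : I) : ℝ) ≤ g.evalAff (co ρ) := by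
      rcases hmax g₀ hg₀ with hn | hl
      · exact absurd hg₀v hn
      · rw [← hg₀e]; exact hl
    exact le_antisymm h1 h2

end Luk

namespace Luk

lemma frepr_eval : ∀ {m : ℕ} (t : LTerm m), FRepr (fun ρ => ((t.eval ρ : I) : ℝ)) := by
  intro m t
  induction t with
  | var i =>
    simp only [LTerm.eval]
    exact frepr_var i
  | scal q t ih =>
    simp only [LTerm.eval]
    refine frepr_congr (frepr_affine_comp ih q.1 0) (fun ρ => ?_)
    show (q.1 : ℝ) * _ + ((0 : ℚ) : ℝ) = _
    rw [Rat.cast_zero, add_zero]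
    rfl
  | join t₁ t₂ ih₁ ih₂ =>
    simp only [LTerm.eval]
    exact frepr_congr (frepr_max ih₁ ih₂) (fun ρ => (coe_max _ _).symm)
  | meet t₁ t₂ ih₁ ih₂ =>
    simp only [LTerm.eval]
    exact frepr_congr (frepr_min ih₁ ih₂) (fun ρ => (coe_min _ _).symm)
  | oplus t₁ t₂ ih₁ ih₂ =>
    simp only [LTerm.eval]
    refine frepr_congr (frepr_min (frepr_cst 1) (frepr_add ih₁ ih₂)) (fun ρ => ?_)
    show min ((1 : ℚ) : ℝ) _ = ((lukAdd (t₁.eval ρ) (t₂.eval ρ) : I) : ℝ)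
    rw [Rat.cast_one]
    rfl
  | odot t₁ t₂ ih₁ ih₂ =>
    simp only [LTerm.eval]
    refine frepr_congr (frepr_max (frepr_cst 0)
      (frepr_add (frepr_add ih₁ ih₂) (frepr_cst (-1)))) (fun ρ => ?_)
    show max ((0 : ℚ) : ℝ) (((t₁.eval ρ : I) : ℝ) + ((t₂.eval ρ : I) : ℝ) + ((-1 : ℚ) : ℝ))
      = ((lukMul (t₁.eval ρ) (t₂.eval ρ) : I) : ℝ)
    have : ((lukMul (t₁.eval ρ) (t₂.eval ρ) : I) : ℝ)
        = max 0 (((t₁.eval ρ : I) : ℝ) + ((t₂.eval ρ : I) : ℝ) - 1) := rfl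
    rw [this]
    push_cast
    rw [show (((t₁.eval ρ : I) : ℝ) + ((t₂.eval ρ : I) : ℝ) + -1)
      = (((t₁.eval ρ : I) : ℝ) + ((t₂.eval ρ : I) : ℝ) - 1) by ring]
  | mu t ih =>
    simp only [LTerm.eval]
    exact frepr_mu t ih
  | nu t ih =>
    simp only [LTerm.eval]
    exact frepr_nu t ih

end Luk

/-- Every Łukasiewicz μ-term `t(x₁, …, xₙ)` is representable by a system of
conditioned linear expressions with rational coefficients: there is a finite
family of pairs `(Cᵢ, eᵢ)` of a finite set of inequalities between rational
affine maps and a rational affine map such that (1) every `r⃗ ∈ [0,1]ⁿ`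
satisfies some `Cᵢ`, and (2) whenever `r⃗ ∈ [0,1]ⁿ` satisfies `Cᵢ`, then
`eᵢ(r⃗) = t(r⃗)`. -/
theorem stmt12 {n : ℕ} (t : LTerm n) :
    ∃ (k : ℕ) (C : Fin k → Finset (AffIneq n)) (e : Fin k → Affine n),
      (∀ ρ : Fin n → I, ∃ i,
          ∀ c ∈ C i, AffIneq.holds c (fun j => ((ρ j : I) : ℝ))) ∧
        (∀ (ρ : Fin n → I) (i : Fin k),
          (∀ c ∈ C i, AffIneq.holds c (fun j => ((ρ j : I) : ℝ))) →
            (e i).evalAff (fun j => ((ρ j : I) : ℝ)) = ((t.eval ρ : I) : ℝ)) := by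
  obtain ⟨L, hcov, hcor⟩ := Luk.frepr_eval t
  refine ⟨L.length, fun i => (L.get i).1, fun i => (L.get i).2, ?_, ?_⟩
  · intro ρ
    obtain ⟨p, hp, hph⟩ := hcov ρ
    obtain ⟨i, hi⟩ := List.mem_iff_get.1 hp
    refine ⟨i, ?_⟩
    show Luk.CondHolds (L.get i).1 (Luk.co ρ)
    rw [hi]
    exact hph
  · intro ρ i hi
    exact hcor ρ (L.get i) (by rw [List.mem_iff_get]; exact ⟨i, rfl⟩) hi

end
end

section
/- Define h : [0,1] → [0,1] by h(x) = max(1/2, g(x)), where g(x) is the greatest fixed point over [0,1] of the monotone map y ↦ max(0, y + min(1, x + 1/2) − 1). Then h(x) = 1/2 for all x < 1/2 and h(x) = 1 for all x ≥ 1/2; in particular, h is not continuous at x = 1/2. (h is the function denoted by the Łukasiewicz μ-term t′(x) = νy.(y ⊙ (x ⊕ 1/2)) ⊔ 1/2.) -/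
open unitInterval

/-- Let `h x = max (1/2) (g x)`, where `g x` is the greatest fixed point over
`[0,1]` of the monotone map `y ↦ max 0 (y + min 1 (x + 1/2) - 1)`.  Then
`h x = 1/2` for `x < 1/2` and `h x = 1` for `x ≥ 1/2`; in particular `h` is not
continuous at `1/2`.  (`h` is denoted by the μ-term
`t′(x) = νy.(y ⊙ (x ⊕ 1/2)) ⊔ 1/2`.) -/
theorem stmt13 (F : I → (I →o I))
    (hF : ∀ x y : I, ((F x y : I) : ℝ) = max 0 ((y : ℝ) + min 1 ((x : ℝ) + 1/2) - 1))
    (h : I → I)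
    (hh : ∀ x : I, ((h x : I) : ℝ) = max (1/2) ((OrderHom.gfp (F x) : I) : ℝ)) :
    (∀ x : I, (x : ℝ) < 1/2 → ((h x : I) : ℝ) = 1/2) ∧
      (∀ x : I, (1/2 : ℝ) ≤ (x : ℝ) → h x = 1) ∧
        ¬ ContinuousAt h ⟨1/2, by norm_num⟩ := by
  have key1 : ∀ x : I, (x : ℝ) < 1/2 → ((OrderHom.gfp (F x) : I) : ℝ) = 0 := by
    intro x hx
    set g := OrderHom.gfp (F x) with hg
    have hfix : F x g = g := OrderHom.map_gfp (F x)
    have hval := hF x g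
    rw [hfix] at hval
    have hmin : min 1 ((x : ℝ) + 1/2) = (x : ℝ) + 1/2 := by
      rw [min_eq_right]; linarith
    rw [hmin] at hval
    rcases le_or_gt ((g : ℝ) + ((x : ℝ) + 1/2) - 1) 0 with h0 | h0
    · rw [max_eq_left h0] at hval; exact hval
    · rw [max_eq_right h0.le] at hval; linarith
  have key2 : ∀ x : I, (1/2 : ℝ) ≤ (x : ℝ) → OrderHom.gfp (F x) = 1 := by
    intro x hx
    refine le_antisymm le_one' ?_
    have h1 : F x 1 = 1 := by
      apply Subtype.ext
      have := hF x 1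
      rw [this]
      have hc1 : ((1 : I) : ℝ) = 1 := rfl
      rw [hc1]
      have hmin : min 1 ((x : ℝ) + 1/2) = 1 := by
        rw [min_eq_left]; linarith
      rw [hmin]; norm_num
    exact (F x).le_gfp h1.ge
  refine ⟨?_, ?_, ?_⟩
  · intro x hx
    rw [hh x, key1 x hx]
    norm_num
  · intro x hx
    apply Subtype.ext
    rw [hh x, key2 x hx]
    have : ((1 : I) : ℝ) = 1 := rfl
    rw [this]; norm_num
  · intro hc
    set a : I := ⟨1/2, by norm_num⟩ with ha
    have hha : h a = 1 := by
      apply Subtype.ext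
      rw [hh a, key2 a (by norm_num)]
      norm_num
    rw [Metric.continuousAt_iff] at hc
    obtain ⟨δ, hδ, hcl⟩ := hc (1/4) (by norm_num)
    set t : ℝ := max 0 (1/2 - δ/2) with ht
    have ht0 : 0 ≤ t := le_max_left _ _
    have ht1 : t ≤ 1 := by
      apply max_le (by norm_num); linarith
    have htlt : t < 1/2 := by
      apply max_lt (by norm_num); linarith
    set xI : I := ⟨t, ht0, ht1⟩ with hxI
    have hle : 1/2 - δ/2 ≤ t := le_max_right _ _
    have hdist : dist xI a < δ := by
      rw [Subtype.dist_eq, Real.dist_eq]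
      show |t - 1/2| < δ
      rw [abs_of_nonpos (by linarith)]
      linarith
    have hval : ((h xI : I) : ℝ) = 1/2 := by
      rw [hh xI, key1 xI htlt]; norm_num
    have hfin : dist ((h xI : I) : ℝ) ((h a : I) : ℝ) < 1/4 := by
      rw [← Subtype.dist_eq]; exact hcl hdist
    rw [hval, hha] at hfin
    have hc1 : ((1 : I) : ℝ) = 1 := rfl
    rw [hc1, Real.dist_eq] at hfin
    rw [abs_of_nonpos (by norm_num)] at hfin
    norm_num at hfin
end

section
/- Let g : [0,1] → [0,1] be monotone, let p ∈ [0,1) and q ∈ ℝ, and set r = q/(1 − p). Suppose r ∈ [0,1], and suppose d ∈ [0,1] satisfies d ≤ r, d is less than or equal to the least fixed point of g, and g(x) = p·x + q for every x ∈ [d, r]. Then the least fixed point of g equals r. (This is the key correctness step for the direct fixed-point evaluation algorithm for Łukasiewicz μ-terms: r is the unique solution of x = p·x + q, and since g agrees with this affine map on the convex region between the current approximation d and r, r is the least fixed point.) -/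
open unitInterval

/-- Key correctness step for the direct fixed-point evaluation algorithm: if
`g : [0,1] → [0,1]` is monotone, `p ∈ [0,1)`, `r = q/(1 - p) ∈ [0,1]`, and
`d ∈ [0,1]` satisfies `d ≤ r`, `d ≤ lfp g`, and `g x = p·x + q` on `[d, r]`,
then `lfp g = r`. -/
theorem stmt15 (g : I →o I) (p q : ℝ) (hp : p ∈ Set.Ico (0:ℝ) 1)
    (r : ℝ) (hr_def : r = q / (1 - p)) (hr : r ∈ Set.Icc (0:ℝ) 1)
    (d : I) (hd1 : (d : ℝ) ≤ r) (hd2 : d ≤ OrderHom.lfp g)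
    (hg : ∀ x : I, (d : ℝ) ≤ (x : ℝ) → (x : ℝ) ≤ r → ((g x : I) : ℝ) = p * (x : ℝ) + q) :
    ((OrderHom.lfp g : I) : ℝ) = r := by
  have hp1 : (1 : ℝ) - p ≠ 0 := by linarith [hp.2]
  have hrq : p * r + q = r := by
    have h2 : r * (1 - p) = q := by rw [hr_def]; exact div_mul_cancel₀ q hp1
    linarith
  set rI : I := ⟨r, hr⟩ with hrI
  have hfix : g rI = rI := by
    apply Subtype.ext
    rw [hg rI hd1 le_rfl]
    exact hrq
  have hle : OrderHom.lfp g ≤ rI := OrderHom.lfp_le_fixed g hfix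
  have hL := hg (OrderHom.lfp g) hd2 hle
  rw [g.map_lfp] at hL
  have : ((OrderHom.lfp g : I) : ℝ) * (1 - p) = q := by linarith
  rw [hr_def]
  field_simp [this]
  exact this
end
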